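/- arXiv:1709.00358 — 12 statements merged into one kernel-verified Lean document; each statement's English description precedes it below -/
import Mathlib

section
/- Let n ≥ 2 and let p : Fin n → ℝ satisfy 1/2 ≤ p i ≤ 1 for all i and be sorted in decreasing order (i ≤ j → p i ≥ p j). Define U(λ) = (∑ i, λ i * p i) − max_i (λ i * p i) on the standard simplex Δ = {λ : Fin n → ℝ | λ i ≥ 0, ∑ i, λ i = 1}. Suppose λ* maximizes U over Δ and λ* i > 0 for some index i > 0 (i.e., i is not the most proficient worker) while λ* (i−1) = 0. Then there exists λ' maximizing U over Δ with λ' (i−1) > 0. -/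
/-- Proposition 3. If an optimal randomized unit assignment puts positive
probability on worker `i > 0` while worker `i - 1` gets zero, then there is an optimal
randomized assignment putting positive probability on worker `i - 1`. -/
theorem stmt_1 (n : ℕ) (hn : 2 ≤ n)
    (p : Fin n → ℝ) (hp : ∀ i, 1 / 2 ≤ p i ∧ p i ≤ 1)
    (hsort : ∀ i j : Fin n, i ≤ j → p j ≤ p i)
    (U : (Fin n → ℝ) → ℝ)
    (hU : ∀ l : Fin n → ℝ, U l = (∑ i, l i * p i) - ⨆ i, l i * p i)
    (lstar : Fin n → ℝ) (hpos : ∀ i, 0 ≤ lstar i) (hsum : ∑ i, lstar i = 1)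
    (hopt : ∀ l : Fin n → ℝ, (∀ i, 0 ≤ l i) → (∑ i, l i = 1) → U l ≤ U lstar)
    (i j : Fin n) (hij : (j : ℕ) + 1 = (i : ℕ))
    (hi : 0 < lstar i) (hj : lstar j = 0) :
    ∃ l' : Fin n → ℝ, (∀ k, 0 ≤ l' k) ∧ (∑ k, l' k = 1) ∧
      (∀ l : Fin n → ℝ, (∀ k, 0 ≤ l k) → (∑ k, l k = 1) → U l ≤ U l') ∧
      0 < l' j := by
  haveI : Nonempty (Fin n) := ⟨⟨0, by omega⟩⟩
  have hne : i ≠ j := by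
    intro h; apply absurd hij; rw [h]; omega
  have hji : j ≤ i := by
    rw [Fin.le_def]; omega
  have hpj : p i ≤ p j := hsort j i hji
  have hpipos : 0 < p i := lt_of_lt_of_le (by norm_num) (hp i).1
  have hpjpos : 0 < p j := lt_of_lt_of_le (by norm_num) (hp j).1
  set l' : Fin n → ℝ := fun k => if k = j then lstar i else if k = i then 0 else lstar k
    with hl'
  have hl'j : l' j = lstar i := by simp [hl']
  have hl'i : l' i = 0 := by simp [hl', hne.symm, hne]
  have hl'k : ∀ k, k ≠ i → k ≠ j → l' k = lstar k := by
    intro k h1 h2; simp [hl', h1, h2]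
  have hl'pos : ∀ k, 0 ≤ l' k := by
    intro k
    by_cases h1 : k = j
    · rw [h1, hl'j]; exact le_of_lt hi
    · by_cases h2 : k = i
      · rw [h2, hl'i]
      · rw [hl'k k h2 h1]; exact hpos k
  -- sum of differences
  have hdiff : ∀ (f g : Fin n → ℝ),
      (∀ k, k ≠ i → k ≠ j → f k = g k) →
      ∑ k, f k = (∑ k, g k) + (f i - g i) + (f j - g j) := by
    intro f g h
    have : ∑ k, (f k - g k) = ∑ k ∈ ({i, j} : Finset (Fin n)), (f k - g k) := by
      refine (Finset.sum_subset (Finset.subset_univ _) ?_).symm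
      intro k _ hk
      simp only [Finset.mem_insert, Finset.mem_singleton, not_or] at hk
      rw [h k hk.1 hk.2]; ring
    rw [Finset.sum_pair hne] at this
    have h2 : ∑ k, (f k - g k) = ∑ k, f k - ∑ k, g k := Finset.sum_sub_distrib f g
    rw [h2] at this
    linarith
  have hsum' : ∑ k, l' k = 1 := by
    have := hdiff l' lstar (fun k h1 h2 => hl'k k h1 h2)
    rw [this, hl'i, hl'j, hj, hsum]; ring
  have hsumU : ∑ k, l' k * p k = (∑ k, lstar k * p k) + lstar i * (p j - p i) := by
    have := hdiff (fun k => l' k * p k) (fun k => lstar k * p k)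
      (fun k h1 h2 => by simp only [hl'k k h1 h2])
    simp only [hl'i, hl'j, hj] at this
    rw [this]; ring
  -- sup facts
  have hbdd : ∀ f : Fin n → ℝ, BddAbove (Set.range f) := fun f => Set.Finite.bddAbove
    (Set.finite_range f)
  set M := ⨆ k, lstar k * p k with hM
  have hMi : lstar i * p i ≤ M := le_ciSup (f := fun k => lstar k * p k) (hbdd _) i
  have hM' : (⨆ k, l' k * p k) ≤ M + lstar i * (p j - p i) := by
    apply ciSup_le
    intro k
    by_cases h1 : k = j
    · rw [h1, hl'j]
      nlinarith
    · by_cases h2 : k = i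
      · rw [h2, hl'i]
        nlinarith [hpos i, mul_nonneg (hpos i) hpipos.le, hi.le]
      · rw [hl'k k h2 h1]
        have : lstar k * p k ≤ M := le_ciSup (f := fun k => lstar k * p k) (hbdd _) k
        nlinarith [hi.le]
  have hUle : U lstar ≤ U l' := by
    rw [hU, hU, hsumU]
    linarith
  exact ⟨l', hl'pos, hsum', fun l hl1 hl2 => le_trans (hopt l hl1 hl2) hUle,
    by rw [hl'j]; exact hi⟩
end

section
/- Let n ≥ 2 and let p : Fin n → ℝ satisfy 1/2 ≤ p i ≤ 1 for all i and be sorted in decreasing order (i ≤ j → p i ≥ p j). Define U(λ) = (∑ i, λ i * p i) − max_i (λ i * p i) on the standard simplex Δ. Then there exists a maximizer λ* of U over Δ whose support is an initial segment of the workers: there is k with 1 ≤ k ≤ n such that λ* i > 0 for all i < k and λ* i = 0 for all i ≥ k. -/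
open Finset

section Aux

variable {n : ℕ}

/-- The utility function. -/
private noncomputable def Ufun (p : Fin n → ℝ) (l : Fin n → ℝ) : ℝ :=
  (∑ i, l i * p i) - ⨆ i, l i * p i

private lemma swap_not_dec [NeZero n] (p : Fin n → ℝ) (hp : ∀ i, 1 / 2 ≤ p i ∧ p i ≤ 1)
    (hsort : ∀ i j : Fin n, i ≤ j → p j ≤ p i)
    (l : Fin n → ℝ) (hl0 : ∀ i, 0 ≤ l i) {i j : Fin n} (hij : i < j)
    (hi : l i = 0) (hj : 0 < l j) :
    Ufun p l ≤ Ufun p (l ∘ Equiv.swap i j) := by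
  have hij' : i ≠ j := ne_of_lt hij
  set σ := Equiv.swap i j with hσ
  set l' := l ∘ σ with hl'
  have hli : l' i = l j := by simp [hl', hσ, Equiv.swap_apply_left]
  have hlj : l' j = l i := by simp [hl', hσ, Equiv.swap_apply_right]
  have hlo : ∀ m : Fin n, m ≠ i → m ≠ j → l' m = l m := by
    intro m h1 h2; simp [hl', hσ, Equiv.swap_apply_of_ne_of_ne h1 h2]
  have hpj0 : (0:ℝ) ≤ p j := le_trans (by norm_num) (hp j).1
  have hd : 0 ≤ l j * (p i - p j) :=
    mul_nonneg (le_of_lt hj) (sub_nonneg.2 (hsort i j (le_of_lt hij)))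
  set d := l j * (p i - p j) with hdd
  -- sums
  have hjmem : j ∈ (univ : Finset (Fin n)) := mem_univ j
  have himem : i ∈ (univ : Finset (Fin n)).erase j := by
    simp [Finset.mem_erase, hij']
  have sum_decomp : ∀ f : Fin n → ℝ,
      ∑ m, f m = f j + (f i + ∑ m ∈ ((univ : Finset (Fin n)).erase j).erase i, f m) := by
    intro f
    rw [← Finset.add_sum_erase _ f hjmem, ← Finset.add_sum_erase _ f himem]
  have rest_eq : ∑ m ∈ ((univ : Finset (Fin n)).erase j).erase i, l' m * p m
      = ∑ m ∈ ((univ : Finset (Fin n)).erase j).erase i, l m * p m := by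
    apply Finset.sum_congr rfl
    intro m hm
    rw [Finset.mem_erase, Finset.mem_erase] at hm
    rw [hlo m hm.1 hm.2.1]
  have hsum : ∑ m, l' m * p m = (∑ m, l m * p m) + d := by
    rw [sum_decomp (fun m => l' m * p m), sum_decomp (fun m => l m * p m), rest_eq,
      hli, hlj, hi]
    ring
  -- sups
  have hbdd : BddAbove (Set.range fun m => l m * p m) := (Set.finite_range _).bddAbove
  have hbdd' : BddAbove (Set.range fun m => l' m * p m) := (Set.finite_range _).bddAbove
  have hSlb : l j * p j ≤ ⨆ m, l m * p m := le_ciSup hbdd j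
  have hS0 : (0:ℝ) ≤ ⨆ m, l m * p m := le_trans (mul_nonneg (le_of_lt hj) hpj0) hSlb
  have hsup : (⨆ m, l' m * p m) ≤ (⨆ m, l m * p m) + d := by
    apply ciSup_le
    intro m
    by_cases hmi : m = i
    · rw [hmi, hli]
      have : l j * p i = l j * p j + d := by rw [hdd]; ring
      rw [this]
      exact add_le_add_left hSlb d
    · by_cases hmj : m = j
      · rw [hmj, hlj, hi, zero_mul]
        exact add_nonneg hS0 hd
      · rw [hlo m hmi hmj]
        calc l m * p m ≤ ⨆ m, l m * p m := le_ciSup hbdd m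
          _ ≤ (⨆ m, l m * p m) + d := le_add_of_nonneg_right hd
  -- conclude
  unfold Ufun
  rw [hsum]
  have := sub_le_sub_left hsup ((∑ m, l m * p m) + d)
  linarith

end Aux

/-- There is an optimal randomized unit assignment whose support is an
initial segment of the workers (the `k` most proficient workers, for some `1 ≤ k ≤ n`). -/
theorem stmt_2 (n : ℕ) (hn : 2 ≤ n)
    (p : Fin n → ℝ) (hp : ∀ i, 1 / 2 ≤ p i ∧ p i ≤ 1)
    (hsort : ∀ i j : Fin n, i ≤ j → p j ≤ p i) :
    ∃ lstar : Fin n → ℝ, (∀ i, 0 ≤ lstar i) ∧ (∑ i, lstar i = 1) ∧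
      (∀ l : Fin n → ℝ, (∀ i, 0 ≤ l i) → (∑ i, l i = 1) →
        ((∑ i, l i * p i) - ⨆ i, l i * p i)
          ≤ ((∑ i, lstar i * p i) - ⨆ i, lstar i * p i)) ∧
      ∃ k : ℕ, 1 ≤ k ∧ k ≤ n ∧
        (∀ i : Fin n, (i : ℕ) < k → 0 < lstar i) ∧
        (∀ i : Fin n, k ≤ (i : ℕ) → lstar i = 0) := by
  haveI : NeZero n := ⟨by omega⟩
  -- utility function
  set U : (Fin n → ℝ) → ℝ := fun l => (∑ i, l i * p i) - ⨆ i, l i * p i with hUdef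
  have hUU : ∀ l, U l = Ufun p l := fun l => rfl
  have hUcont : Continuous U := by
    apply Continuous.sub
    · exact continuous_finset_sum _ fun i _ => (continuous_apply i).mul continuous_const
    · have h1 : Continuous fun l : Fin n → ℝ =>
          (univ : Finset (Fin n)).sup' univ_nonempty (fun i => l i * p i) :=
        Continuous.finset_sup'_apply univ_nonempty
          (fun i _ => (continuous_apply i).mul continuous_const)
      have h2 : (fun l : Fin n → ℝ => ⨆ i, l i * p i)
          = fun l : Fin n → ℝ =>
            (univ : Finset (Fin n)).sup' univ_nonempty (fun i => l i * p i) := by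
        funext l
        exact (Finset.sup'_univ_eq_ciSup _).symm
      rw [h2]; exact h1
  -- existence of a maximizer on the simplex
  obtain ⟨l0, hl0mem, hl0max⟩ :=
    (isCompact_stdSimplex ℝ (Fin n)).exists_isMaxOn
      ⟨Pi.single (0 : Fin n) 1, single_mem_stdSimplex ℝ 0⟩ hUcont.continuousOn
  have hl0max' : ∀ m ∈ stdSimplex ℝ (Fin n), U m ≤ U l0 := fun m hm => hl0max hm
  -- measure for termination
  set N : (Fin n → ℝ) → ℕ := fun l => ∑ m : Fin n, if 0 < l m then (m : ℕ) else 0 with hNdef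
  -- key induction: every maximizer can be turned into one with downward-closed support
  have key : ∀ M : ℕ, ∀ l : Fin n → ℝ, l ∈ stdSimplex ℝ (Fin n) →
      (∀ m ∈ stdSimplex ℝ (Fin n), U m ≤ U l) → N l ≤ M →
      ∃ l', l' ∈ stdSimplex ℝ (Fin n) ∧ (∀ m ∈ stdSimplex ℝ (Fin n), U m ≤ U l') ∧
        (∀ i j : Fin n, i ≤ j → 0 < l' j → 0 < l' i) := by
    intro M
    induction M with
    | zero =>
      intro l hmem hmax hNl
      refine ⟨l, hmem, hmax, ?_⟩
      intro i j hij hj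
      by_contra hi
      have hi0 : l i = 0 := le_antisymm (not_lt.mp hi) (hmem.1 i)
      have hij' : i < j := lt_of_le_of_ne hij (by rintro rfl; exact hi hj)
      have : (j:ℕ) ≤ N l := by
        rw [hNdef]
        calc (j:ℕ) = if 0 < l j then (j:ℕ) else 0 := by rw [if_pos hj]
          _ ≤ ∑ m : Fin n, if 0 < l m then (m : ℕ) else 0 :=
            Finset.single_le_sum (f := fun m => if 0 < l m then (m:ℕ) else 0)
              (fun m _ => by positivity) (mem_univ j)
      have hjpos : 0 < (j:ℕ) := lt_of_le_of_lt (Nat.zero_le _) hij'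
      omega
    | succ M ih =>
      intro l hmem hmax hNl
      by_cases hdc : ∀ i j : Fin n, i ≤ j → 0 < l j → 0 < l i
      · exact ⟨l, hmem, hmax, hdc⟩
      · push_neg at hdc
        obtain ⟨i, j, hij, hj, hi⟩ := hdc
        have hi0 : l i = 0 := le_antisymm hi (hmem.1 i)
        have hij' : i < j := lt_of_le_of_ne hij
          (by rintro rfl; exact absurd hj (not_lt.mpr hi))
        have hij'' : i ≠ j := ne_of_lt hij'
        set l' := l ∘ Equiv.swap i j with hl'def
        have hli : l' i = l j := by simp [hl'def, Equiv.swap_apply_left]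
        have hlj : l' j = l i := by simp [hl'def, Equiv.swap_apply_right]
        have hlo : ∀ m : Fin n, m ≠ i → m ≠ j → l' m = l m := by
          intro m h1 h2; simp [hl'def, Equiv.swap_apply_of_ne_of_ne h1 h2]
        have hmem' : l' ∈ stdSimplex ℝ (Fin n) := by
          constructor
          · intro m; exact hmem.1 _
          · calc ∑ x, l' x = ∑ x, l (Equiv.swap i j x) := rfl
              _ = ∑ x, l x := Equiv.sum_comp _ _
              _ = 1 := hmem.2
        have hUle : U l ≤ U l' := by
          rw [hUU, hUU]
          exact swap_not_dec p hp hsort l hmem.1 hij' hi0 hj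
        have hmax' : ∀ m ∈ stdSimplex ℝ (Fin n), U m ≤ U l' :=
          fun m hm => le_trans (hmax m hm) hUle
        -- measure decreases
        have hjmem : j ∈ (univ : Finset (Fin n)) := mem_univ j
        have himem : i ∈ (univ : Finset (Fin n)).erase j := by
          simp [Finset.mem_erase, hij'']
        have sum_decomp : ∀ f : Fin n → ℕ,
            ∑ m, f m = f j + (f i + ∑ m ∈ ((univ : Finset (Fin n)).erase j).erase i, f m) := by
          intro f
          rw [← Finset.add_sum_erase _ f hjmem, ← Finset.add_sum_erase _ f himem]
        have rest_eq : (∑ m ∈ ((univ : Finset (Fin n)).erase j).erase i,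
              if 0 < l' m then (m:ℕ) else 0)
            = ∑ m ∈ ((univ : Finset (Fin n)).erase j).erase i,
              if 0 < l m then (m:ℕ) else 0 := by
          apply Finset.sum_congr rfl
          intro m hm
          rw [Finset.mem_erase, Finset.mem_erase] at hm
          rw [hlo m hm.1 hm.2.1]
        have hNeq : N l' + (j:ℕ) = N l + (i:ℕ) := by
          show (∑ m : Fin n, if 0 < l' m then (m:ℕ) else 0) + (j:ℕ)
            = (∑ m : Fin n, if 0 < l m then (m:ℕ) else 0) + (i:ℕ)
          rw [sum_decomp (fun m => if 0 < l' m then (m:ℕ) else 0),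
            sum_decomp (fun m => if 0 < l m then (m:ℕ) else 0), rest_eq]
          have e1 : (if 0 < l' j then (j:ℕ) else 0) = 0 := by rw [hlj, hi0]; simp
          have e2 : (if 0 < l' i then (i:ℕ) else 0) = (i:ℕ) := by rw [hli, if_pos hj]
          have e3 : (if 0 < l j then (j:ℕ) else 0) = (j:ℕ) := by rw [if_pos hj]
          have e4 : (if 0 < l i then (i:ℕ) else 0) = 0 := by rw [hi0]; simp
          rw [e1, e2, e3, e4]
          omega
        have hNlt : N l' < N l := by
          have : (i:ℕ) < (j:ℕ) := hij'
          omega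
        exact ih l' hmem' hmax' (by omega)
  obtain ⟨lstar, hmem, hmax, hdc⟩ := key (N l0) l0 hl0mem hl0max' le_rfl
  -- extract k
  set S : Finset (Fin n) := univ.filter (fun i => 0 < lstar i) with hSdef
  set k : ℕ := S.card with hkdef
  have hex : ∃ i, 0 < lstar i := by
    by_contra h
    push_neg at h
    have hz : ∀ i, lstar i = 0 := fun i => le_antisymm (h i) (hmem.1 i)
    have h0 : ∑ i, lstar i = 0 := Finset.sum_eq_zero (fun i _ => hz i)
    rw [hmem.2] at h0
    norm_num at h0
  have hk1 : 1 ≤ k := by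
    obtain ⟨i, hi⟩ := hex
    have : i ∈ S := by simp [hSdef, hi]
    exact Finset.card_pos.mpr ⟨i, this⟩
  have hkn : k ≤ n := by
    calc k ≤ (univ : Finset (Fin n)).card := Finset.card_filter_le _ _
      _ = n := Finset.card_univ.trans (Fintype.card_fin n)
  refine ⟨lstar, hmem.1, hmem.2, fun l h1 h2 => hmax l ⟨h1, h2⟩, k, hk1, hkn, ?_, ?_⟩
  · -- i < k → 0 < lstar i
    intro i hik
    by_contra hi
    have hi0 : lstar i = 0 := le_antisymm (not_lt.mp hi) (hmem.1 i)
    have hsub : S ⊆ Finset.Iio i := by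
      intro m hm
      rw [hSdef, Finset.mem_filter] at hm
      rw [Finset.mem_Iio]
      by_contra hge
      push_neg at hge
      have := hdc i m hge hm.2
      rw [hi0] at this
      exact lt_irrefl 0 this
    have := Finset.card_le_card hsub
    rw [Fin.card_Iio] at this
    omega
  · -- k ≤ i → lstar i = 0
    intro i hki
    by_contra hi
    have hipos : 0 < lstar i := lt_of_le_of_ne (hmem.1 i) (Ne.symm hi)
    have hsub : Finset.Iic i ⊆ S := by
      intro m hm
      rw [Finset.mem_Iic] at hm
      rw [hSdef, Finset.mem_filter]
      exact ⟨mem_univ m, hdc m i hm hipos⟩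
    have := Finset.card_le_card hsub
    rw [Fin.card_Iic] at this
    omega
end

section
/- Let n ≥ 2 and let p : Fin n → ℝ satisfy 1/2 ≤ p i ≤ 1 for all i and be sorted in decreasing order (i ≤ j → p i ≥ p j). Define U(λ) = (∑ i, λ i * p i) − max_i (λ i * p i) on the standard simplex Δ. Then there exists a maximizer λ* of U over Δ that is balanced on its support: for all i, j with λ* i > 0 and λ* j > 0, one has λ* i * p i = λ* j * p j. -/
private lemma stmt3_aux (kR V A B pq Pq M E : ℝ) (hA : 0 < A) (hPq : 0 < Pq)
    (hB : B = A + Pq) (hpq : 0 < pq) (hpPq : pq * Pq = 1)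
    (hMA : A * M ≤ 1) (hMB : 1 ≤ B * M)
    (hVk : kR - 1 ≤ V * A) (hVk1 : kR ≤ V * B)
    (hkey : E - pq ≤ M * kR - M * pq * A) : E - M ≤ V := by
  have hBpos : 0 < B := by rw [hB]; linarith
  rcases le_or_gt 0 (kR - 1 - pq * A) with hc | hc
  · have hprod : 0 ≤ (kR - 1 - pq * A) * (1 - M * A) :=
      mul_nonneg hc (by nlinarith)
    nlinarith
  · have hprod : 0 ≤ (-(kR - 1 - pq * A)) * (M * B - 1) :=
      mul_nonneg (by linarith) (by nlinarith)
    nlinarith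

/-- Proposition 4. There is an optimal randomized unit assignment that is
balanced on its support: `lstar i * p i = lstar j * p j` whenever both are in the support. -/
theorem stmt_3 (n : ℕ) (hn : 2 ≤ n)
    (p : Fin n → ℝ) (hp : ∀ i, 1 / 2 ≤ p i ∧ p i ≤ 1)
    (hsort : ∀ i j : Fin n, i ≤ j → p j ≤ p i) :
    ∃ lstar : Fin n → ℝ, (∀ i, 0 ≤ lstar i) ∧ (∑ i, lstar i = 1) ∧
      (∀ l : Fin n → ℝ, (∀ i, 0 ≤ l i) → (∑ i, l i = 1) →
        ((∑ i, l i * p i) - ⨆ i, l i * p i)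
          ≤ ((∑ i, lstar i * p i) - ⨆ i, lstar i * p i)) ∧
      (∀ i j : Fin n, 0 < lstar i → 0 < lstar j →
        lstar i * p i = lstar j * p j) := by
  have h0n : 0 < n := by omega
  haveI : Nonempty (Fin n) := ⟨⟨0, h0n⟩⟩
  have hpos : ∀ i, (0:ℝ) < p i := fun i => lt_of_lt_of_le (by norm_num) (hp i).1
  set P : Fin n → ℝ := fun i => (p i)⁻¹ with hPdef
  have hPpos : ∀ i, 0 < P i := fun i => inv_pos.2 (hpos i)
  have hPp : ∀ i, P i * p i = 1 := fun i => inv_mul_cancel₀ (hpos i).ne'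
  have hpP : ∀ i, p i * P i = 1 := fun i => mul_inv_cancel₀ (hpos i).ne'
  set S : ℕ → ℝ := fun k => ∑ i : Fin n, if (i:ℕ) < k then P i else 0 with hSdef
  have hSpos : ∀ k, 1 ≤ k → 0 < S k := by
    intro k hk
    apply Finset.sum_pos'
    · intro i _; split
      · exact (hPpos i).le
      · exact le_refl 0
    · refine ⟨⟨0, h0n⟩, Finset.mem_univ _, ?_⟩
      have hc : ((⟨0, h0n⟩ : Fin n) : ℕ) < k := by simpa using Nat.lt_of_lt_of_le Nat.zero_lt_one hk
      rw [if_pos hc]; exact hPpos _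
  -- splitting lemma
  have hsplit : ∀ (f : Fin n → ℝ) (k) (h : k < n),
      (∑ i : Fin n, if (i:ℕ) < k + 1 then f i else 0)
        = (∑ i : Fin n, if (i:ℕ) < k then f i else 0) + f ⟨k, h⟩ := by
    intro f k h
    have key : ∀ i : Fin n, (if (i:ℕ) < k + 1 then f i else 0)
        = (if (i:ℕ) < k then f i else 0) + (if i = ⟨k, h⟩ then f i else 0) := by
      intro i
      rcases lt_trichotomy (i:ℕ) k with h1 | h1 | h1
      · have h2 : i ≠ ⟨k, h⟩ := by simp [Fin.ext_iff]; omega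
        simp [h1, Nat.lt_succ_of_lt h1, h2]
      · have h2 : i = ⟨k, h⟩ := by simp [Fin.ext_iff]; omega
        simp [h1, h2]
      · have h2 : i ≠ ⟨k, h⟩ := by simp [Fin.ext_iff]; omega
        have h3 : ¬ ((i:ℕ) < k + 1) := by omega
        have h4 : ¬ ((i:ℕ) < k) := by omega
        simp [h2, h3, h4]
    rw [Finset.sum_congr rfl (fun i _ => key i), Finset.sum_add_distrib,
      Finset.sum_ite_eq' Finset.univ (⟨k, h⟩ : Fin n) f]
    simp
  have hcount : ∀ k, k ≤ n → (∑ i : Fin n, if (i:ℕ) < k then (1:ℝ) else 0) = k := by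
    intro k
    induction k with
    | zero => intro _; simp
    | succ m ih =>
      intro hm
      rw [hsplit (fun _ => (1:ℝ)) m (by omega), ih (by omega)]
      push_cast; ring
  have hS1 : S 1 = P ⟨0, h0n⟩ := by
    have h := hsplit P 0 h0n
    simp only [Nat.not_lt_zero, if_false, Finset.sum_const_zero, zero_add] at h
    exact h
  -- argmax over Icc 1 n
  set g : ℕ → ℝ := fun k => ((k:ℝ) - 1) / S k with hgdef
  obtain ⟨K, hKmem, hKmax⟩ := Finset.exists_max_image (Finset.Icc 1 n) g ⟨1, by simp; omega⟩
  rw [Finset.mem_Icc] at hKmem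
  have hSK := hSpos K hKmem.1
  set lstar : Fin n → ℝ := fun i => if (i:ℕ) < K then P i / S K else 0 with hldef
  have hlnn : ∀ i, 0 ≤ lstar i := by
    intro i; simp only [hldef]; split
    · exact div_nonneg (hPpos i).le hSK.le
    · exact le_refl 0
  have hlsum : ∑ i, lstar i = 1 := by
    have h : ∀ i : Fin n, lstar i = (if (i:ℕ) < K then P i else 0) / S K := by
      intro i; simp only [hldef]; split <;> simp
    rw [Finset.sum_congr rfl (fun i _ => h i), ← Finset.sum_div]
    exact div_self hSK.ne'
  have hlp : ∀ i : Fin n, lstar i * p i = if (i:ℕ) < K then 1 / S K else 0 := by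
    intro i; simp only [hldef]; split
    · rw [div_mul_eq_mul_div, hPp]
    · ring
  have h0K : ((⟨0, h0n⟩ : Fin n) : ℕ) < K := by simpa using Nat.lt_of_lt_of_le Nat.zero_lt_one hKmem.1
  have hsupstar : (⨆ i, lstar i * p i) = 1 / S K := by
    apply le_antisymm
    · apply ciSup_le
      intro i; rw [hlp i]; split
      · exact le_refl _
      · positivity
    · have h := le_ciSup (Set.Finite.bddAbove (Set.finite_range fun i => lstar i * p i))
        (⟨0, h0n⟩ : Fin n)
      rw [hlp _, if_pos h0K] at h
      exact h
  have hsumstar : ∑ i, lstar i * p i = (K:ℝ) / S K := by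
    have h : ∀ i : Fin n, lstar i * p i = (if (i:ℕ) < K then (1:ℝ) else 0) * (1 / S K) := by
      intro i; rw [hlp i]; split <;> ring
    rw [Finset.sum_congr rfl (fun i _ => h i), ← Finset.sum_mul, hcount K hKmem.2]
    ring
  have hUstar : (∑ i, lstar i * p i) - (⨆ i, lstar i * p i) = g K := by
    rw [hsumstar, hsupstar, hgdef]; field_simp
  refine ⟨lstar, hlnn, hlsum, ?_, ?_⟩
  · -- optimality
    intro l hl hlsum1
    rw [hUstar]
    set M : ℝ := ⨆ i, l i * p i with hMdef
    have bdd : BddAbove (Set.range fun i => l i * p i) :=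
      Set.Finite.bddAbove (Set.finite_range _)
    have hMge : ∀ i, l i * p i ≤ M := fun i => le_ciSup bdd i
    have hl1 : ∀ i, l i ≤ 1 := by
      intro i
      rw [← hlsum1]
      exact Finset.single_le_sum (fun j _ => hl j) (Finset.mem_univ i)
    have hMle : M ≤ p ⟨0, h0n⟩ := by
      apply ciSup_le
      intro i
      calc l i * p i ≤ 1 * p i := by nlinarith [hpos i, hl i, hl1 i]
        _ ≤ p ⟨0, h0n⟩ := by rw [one_mul]; exact hsort ⟨0, h0n⟩ i (by simp [Fin.le_def])
    have hMpos : 0 < M := by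
      have hex : ∃ i, 0 < l i := by
        by_contra hc
        push_neg at hc
        have h : ∀ i, l i = 0 := fun i => le_antisymm (hc i) (hl i)
        simp [h] at hlsum1
      obtain ⟨i, hi⟩ := hex
      exact lt_of_lt_of_le (by nlinarith [hpos i]) (hMge i)
    have hli : ∀ i, l i ≤ M * P i := by
      intro i
      have h2 : (M * P i) * p i = M := by
        rw [mul_assoc, hPp, mul_one]
      exact le_of_mul_le_mul_right (by rw [h2]; exact hMge i) (hpos i)
    have hSn : S n = ∑ i : Fin n, P i := by
      apply Finset.sum_congr rfl; intro i _; rw [if_pos i.is_lt]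
    have h1Mn : 1 ≤ M * S n := by
      rw [hSn, Finset.mul_sum, ← hlsum1]
      exact Finset.sum_le_sum fun i _ => hli i
    set T := (Finset.Icc 1 (n-1)).filter (fun j => S j * M ≤ 1) with hTdef
    have hT1 : 1 ∈ T := by
      rw [hTdef, Finset.mem_filter, Finset.mem_Icc]
      refine ⟨⟨le_refl 1, by omega⟩, ?_⟩
      rw [hS1]
      calc P ⟨0,h0n⟩ * M ≤ P ⟨0,h0n⟩ * p ⟨0,h0n⟩ := by
            nlinarith [hPpos ⟨0,h0n⟩, hMle, hMpos]
        _ = 1 := hPp _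
    set k := T.max' ⟨1, hT1⟩ with hkdef
    have hkT : k ∈ T := T.max'_mem _
    rw [hTdef, Finset.mem_filter, Finset.mem_Icc] at hkT
    obtain ⟨⟨hk1, hkn⟩, hkM⟩ := hkT
    have hkn' : k < n := by omega
    have hk2 : 1 ≤ S (k+1) * M := by
      by_cases hc : k = n - 1
      · have h : k + 1 = n := by omega
        rw [h]; nlinarith [h1Mn]
      · by_contra hcon
        push_neg at hcon
        have hmem : k + 1 ∈ T := by
          rw [hTdef, Finset.mem_filter, Finset.mem_Icc]
          exact ⟨⟨by omega, by omega⟩, hcon.le⟩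
        have := Finset.le_max' T (k+1) hmem
        rw [← hkdef] at this; omega
    set q : Fin n := ⟨k, hkn'⟩ with hqdef
    have hSk1 : S (k+1) = S k + P q := hsplit P k hkn'
    have hpoint : ∀ i : Fin n, l i * p i - p q * l i
        ≤ if (i:ℕ) < k then M * (1 - p q * P i) else 0 := by
      intro i
      by_cases hik : (i:ℕ) < k
      · rw [if_pos hik]
        have hqi : p q ≤ p i := hsort i q (by rw [Fin.le_def]; exact hik.le)
        have h3 : 0 ≤ 1 - p q * P i := by
          nlinarith [hpP i, hPpos i, hqi]
        have h2 : l i * p i - p q * l i = (l i * p i) * (1 - p q * P i) := by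
          have h4 : (l i * p i) * (1 - p q * P i)
              = l i * p i - (p q * l i) * (p i * P i) := by ring
          rw [h4, hpP, mul_one]
        rw [h2]
        exact mul_le_mul_of_nonneg_right (hMge i) h3
      · rw [if_neg hik]
        have hiq : p i ≤ p q := hsort q i (by rw [Fin.le_def]; exact Nat.le_of_not_lt hik)
        nlinarith [hl i]
    have hkey : (∑ i, l i * p i) - p q ≤ M * (k:ℝ) - M * p q * S k := by
      have hs := Finset.sum_le_sum (fun i (_ : i ∈ Finset.univ) => hpoint i)
      rw [Finset.sum_sub_distrib, ← Finset.mul_sum, hlsum1, mul_one] at hs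
      refine le_trans hs ?_
      have heach : ∀ i : Fin n, (if (i:ℕ) < k then M * (1 - p q * P i) else 0)
          = M * (if (i:ℕ) < k then (1:ℝ) else 0)
            - M * p q * (if (i:ℕ) < k then P i else 0) := by
        intro i; split <;> ring
      rw [Finset.sum_congr rfl (fun i _ => heach i), Finset.sum_sub_distrib,
        ← Finset.mul_sum, ← Finset.mul_sum, hcount k (by omega)]
    -- final algebra
    have hSkpos := hSpos k hk1
    have hSk1pos := hSpos (k+1) (by omega)
    have hpq := hpos q
    have hpPq := hpP q
    have hVk : (k:ℝ) - 1 ≤ g K * S k := by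
      have h := hKmax k (by rw [Finset.mem_Icc]; omega)
      rw [hgdef] at h
      exact (div_le_iff₀ hSkpos).1 h
    have hVk1 : (k:ℝ) ≤ g K * S (k+1) := by
      have h := hKmax (k+1) (by rw [Finset.mem_Icc]; omega)
      rw [hgdef] at h
      have h2 := (div_le_iff₀ hSk1pos).1 h
      push_cast at h2
      linarith
    exact stmt3_aux (k:ℝ) (g K) (S k) (S (k+1)) (p q) (P q) M _
      hSkpos (hPpos q) hSk1 hpq hpPq hkM hk2 hVk hVk1 hkey
  · -- balanced
    intro i j hi hj
    have hiK : (i:ℕ) < K := by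
      by_contra hc; simp only [hldef] at hi; rw [if_neg hc] at hi; exact lt_irrefl 0 hi
    have hjK : (j:ℕ) < K := by
      by_contra hc; simp only [hldef] at hj; rw [if_neg hc] at hj; exact lt_irrefl 0 hj
    rw [hlp i, hlp j, if_pos hiK, if_pos hjK]
end

section
/- Let p : Fin n → ℝ satisfy 1/2 ≤ p i ≤ 1 for all i, and fix k with 1 ≤ k ≤ n. Define λ by λ i = (1/p i) / (∑_{j < k} 1/p j) for i < k and λ i = 0 for i ≥ k. Then λ lies in the standard simplex, λ i * p i = 1 / (∑_{j < k} 1/p j) for all i < k, and U(λ) = (∑ i, λ i * p i) − max_i (λ i * p i) = (k − 1) / (∑_{j < k} 1/p j). -/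
/-- The balanced assignment on the top `k` workers,
`lam i = (1/p i) / (∑_{j<k} 1/p j)` for `i < k` and `0` otherwise, lies in the simplex,
gives each supported worker the same attacker value `1/V`, and has defender utility
`(k - 1) / V` where `V = ∑_{j<k} 1/p j`. -/
theorem stmt_4 (n k : ℕ) (hk1 : 1 ≤ k) (hkn : k ≤ n)
    (p : Fin n → ℝ) (hp : ∀ i, 1 / 2 ≤ p i ∧ p i ≤ 1)
    (V : ℝ) (hV : V = ∑ j ∈ Finset.univ.filter (fun j : Fin n => (j : ℕ) < k), 1 / p j)
    (lam : Fin n → ℝ)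
    (hlam : ∀ i : Fin n, lam i = if (i : ℕ) < k then (1 / p i) / V else 0) :
    (∀ i, 0 ≤ lam i) ∧ (∑ i, lam i = 1) ∧
      (∀ i : Fin n, (i : ℕ) < k → lam i * p i = 1 / V) ∧
      ((∑ i, lam i * p i) - ⨆ i, lam i * p i) = ((k : ℝ) - 1) / V := by
  have hppos : ∀ i, 0 < p i := fun i => lt_of_lt_of_le (by norm_num) (hp i).1
  have h0k : (0 : ℕ) < n := lt_of_lt_of_le hk1 hkn
  have hi0 : ((⟨0, h0k⟩ : Fin n) : ℕ) < k := hk1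
  have hVpos : 0 < V := by
    rw [hV]
    apply Finset.sum_pos
    · intro i _; exact div_pos one_pos (hppos i)
    · exact ⟨⟨0, h0k⟩, Finset.mem_filter.mpr ⟨Finset.mem_univ _, hi0⟩⟩
  have hnonneg : ∀ i, 0 ≤ lam i := by
    intro i; rw [hlam i]
    split
    · exact div_nonneg (div_pos one_pos (hppos i)).le hVpos.le
    · exact le_refl 0
  have hsum : ∑ i, lam i = 1 := by
    have : ∑ i, lam i = ∑ i ∈ Finset.univ.filter (fun j : Fin n => (j : ℕ) < k),
        (1 / p i) / V := by
      rw [Finset.sum_filter]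
      exact Finset.sum_congr rfl fun i _ => by rw [hlam i]
    rw [this, ← Finset.sum_div, ← hV, div_self hVpos.ne']
  have hval : ∀ i : Fin n, (i : ℕ) < k → lam i * p i = 1 / V := by
    intro i hi
    rw [hlam i, if_pos hi]
    field_simp
    exact div_self (hppos i).ne'
  have hcard : (Finset.univ.filter (fun j : Fin n => (j : ℕ) < k)).card = k := by
    have : Finset.univ.filter (fun j : Fin n => (j : ℕ) < k)
        = Finset.map (Fin.castLEEmb hkn) Finset.univ := by
      ext j
      simp only [Finset.mem_filter, Finset.mem_univ, true_and, Finset.mem_map]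
      constructor
      · intro hj; exact ⟨⟨j, hj⟩, Fin.ext rfl⟩
      · rintro ⟨a, rfl⟩; simp
    simp [this]
  have hsump : ∑ i, lam i * p i = k / V := by
    have : ∑ i, lam i * p i = ∑ i ∈ Finset.univ.filter (fun j : Fin n => (j : ℕ) < k),
        (1 / V) := by
      rw [Finset.sum_filter]
      refine Finset.sum_congr rfl fun i _ => ?_
      by_cases hi : (i : ℕ) < k
      · rw [if_pos hi]; exact hval i hi
      · rw [if_neg hi, hlam i, if_neg hi, zero_mul]
    rw [this, Finset.sum_const, hcard, nsmul_eq_mul]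
    ring
  have hsup : (⨆ i, lam i * p i) = 1 / V := by
    apply le_antisymm
    · haveI : Nonempty (Fin n) := ⟨⟨0, h0k⟩⟩
      apply ciSup_le
      intro i
      by_cases hi : (i : ℕ) < k
      · exact (hval i hi).le
      · rw [hlam i, if_neg hi, zero_mul]
        exact (div_pos one_pos hVpos).le
    · have := le_ciSup (f := fun i => lam i * p i) (Finite.bddAbove_range _) ⟨0, h0k⟩
      rwa [hval _ hi0] at this
  refine ⟨hnonneg, hsum, hval, ?_⟩
  rw [hsump, hsup]
  ring
end

section
/- Let n ≥ 2 and let p : Fin n → ℝ satisfy 1/2 ≤ p i ≤ 1 for all i and be sorted in decreasing order (i ≤ j → p i ≥ p j). Then the maximum over the standard simplex Δ of U(λ) = (∑ i, λ i * p i) − max_i (λ i * p i) equals the maximum over k ∈ {1, …, n} of (k − 1) / (∑_{j < k} 1/p j). In particular, the optimal randomized unit assignment places probability λ i = (1/p i) / (∑_{j < k*} 1/p j) on each of the k* most proficient workers, where k* attains this maximum. -/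
private noncomputable def stmt5S (n : ℕ) (p : Fin n → ℝ) (k : ℕ) : ℝ :=
  ∑ j ∈ Finset.univ.filter (fun j : Fin n => (j : ℕ) < k), 1 / p j

private lemma stmt5_filter_succ {n k : ℕ} (hk : k < n) :
    Finset.univ.filter (fun j : Fin n => (j : ℕ) < k + 1) =
      insert ⟨k, hk⟩ (Finset.univ.filter (fun j : Fin n => (j : ℕ) < k)) := by
  ext j
  simp only [Finset.mem_filter, Finset.mem_univ, true_and, Finset.mem_insert, Fin.ext_iff]
  omega

private lemma stmt5_card {n k : ℕ} (hk : k ≤ n) :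
    (Finset.univ.filter (fun j : Fin n => (j : ℕ) < k)).card = k := by
  induction k with
  | zero => simp
  | succ k ih =>
    rw [stmt5_filter_succ (by omega), Finset.card_insert_of_notMem (by simp), ih (by omega)]

private lemma stmt5S_succ {n : ℕ} (p : Fin n → ℝ) {k : ℕ} (hk : k < n) :
    stmt5S n p (k + 1) = stmt5S n p k + 1 / p ⟨k, hk⟩ := by
  unfold stmt5S
  rw [stmt5_filter_succ hk, Finset.sum_insert (by simp)]
  ring

private lemma stmt5S_pos {n : ℕ} (hn0 : 0 < n) (p : Fin n → ℝ) (hp0 : ∀ i, 0 < p i)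
    {k : ℕ} (hk : 1 ≤ k) : 0 < stmt5S n p k := by
  apply Finset.sum_pos (fun j _ => div_pos one_pos (hp0 j))
  refine ⟨⟨0, hn0⟩, ?_⟩
  simp only [Finset.mem_filter, Finset.mem_univ, true_and]
  exact Nat.lt_of_lt_of_le Nat.zero_lt_one hk

private lemma stmt5_attain {n : ℕ} (hn0 : 0 < n) (p : Fin n → ℝ) (hp0 : ∀ i, 0 < p i)
    {k : ℕ} (h1 : 1 ≤ k) (h2 : k ≤ n) :
    (∀ i : Fin n, 0 ≤ (if (i : ℕ) < k then (1 / p i) / stmt5S n p k else 0)) ∧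
    (∑ i : Fin n, (if (i : ℕ) < k then (1 / p i) / stmt5S n p k else 0)) = 1 ∧
    ((∑ i : Fin n, (if (i : ℕ) < k then (1 / p i) / stmt5S n p k else 0) * p i) -
      ⨆ i : Fin n, (if (i : ℕ) < k then (1 / p i) / stmt5S n p k else 0) * p i)
      = ((k : ℝ) - 1) / stmt5S n p k := by
  haveI : Nonempty (Fin n) := ⟨⟨0, hn0⟩⟩
  have hV : 0 < stmt5S n p k := stmt5S_pos hn0 p hp0 h1
  have hconst : ∀ i : Fin n,
      (if (i : ℕ) < k then (1 / p i) / stmt5S n p k else 0) * p i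
        = if (i : ℕ) < k then 1 / stmt5S n p k else 0 := by
    intro i
    split
    · have hpi := (hp0 i).ne'
      field_simp
    · ring
  have hlsum : (∑ i : Fin n, (if (i : ℕ) < k then (1 / p i) / stmt5S n p k else 0)) = 1 := by
    rw [← Finset.sum_filter, ← Finset.sum_div]
    exact div_self (ne_of_gt hV)
  have hpsum : (∑ i : Fin n, (if (i : ℕ) < k then (1 / p i) / stmt5S n p k else 0) * p i)
      = (k : ℝ) / stmt5S n p k := by
    simp only [hconst]
    rw [← Finset.sum_filter, Finset.sum_const, stmt5_card h2, nsmul_eq_mul, mul_one_div]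
  have hsup : (⨆ i : Fin n, (if (i : ℕ) < k then (1 / p i) / stmt5S n p k else 0) * p i)
      = 1 / stmt5S n p k := by
    apply le_antisymm
    · apply ciSup_le
      intro i
      rw [hconst]
      split
      · exact le_rfl
      · exact (div_pos one_pos hV).le
    · have h0 : (if ((⟨0, hn0⟩ : Fin n) : ℕ) < k then (1 / p ⟨0, hn0⟩) / stmt5S n p k else 0)
          * p ⟨0, hn0⟩ = 1 / stmt5S n p k := by
        rw [hconst]
        exact if_pos (Nat.lt_of_lt_of_le Nat.zero_lt_one h1)
      rw [← h0]
      exact le_ciSup (Set.Finite.bddAbove (Set.finite_range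
        (fun i : Fin n => (if (i : ℕ) < k then (1 / p i) / stmt5S n p k else 0) * p i)))
        ⟨0, hn0⟩
  refine ⟨fun i => ?_, hlsum, ?_⟩
  · split
    · exact div_nonneg (div_nonneg one_pos.le (hp0 i).le) hV.le
    · exact le_rfl
  · rw [hpsum, hsup, div_sub_div_same]

private lemma stmt5_upper {n : ℕ} (hn : 2 ≤ n) (p : Fin n → ℝ)
    (hp : ∀ i, 1 / 2 ≤ p i ∧ p i ≤ 1)
    (hsort : ∀ i j : Fin n, i ≤ j → p j ≤ p i)
    (l : Fin n → ℝ) (hl0 : ∀ i, 0 ≤ l i) (hl1 : ∑ i, l i = 1) :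
    ∃ k : ℕ, 1 ≤ k ∧ k ≤ n ∧
      (∑ i, l i * p i) - (⨆ i, l i * p i) ≤ ((k : ℝ) - 1) / stmt5S n p k := by
  have hn0 : 0 < n := by omega
  haveI : Nonempty (Fin n) := ⟨⟨0, hn0⟩⟩
  have hp0 : ∀ i, (0:ℝ) < p i := fun i => lt_of_lt_of_le (by norm_num) (hp i).1
  obtain ⟨m, hm⟩ := Finite.exists_max (fun i => l i * p i)
  set M := l m * p m with hMdef
  have hsup : (⨆ i, l i * p i) = M := by
    apply le_antisymm (ciSup_le hm)
    rw [hMdef]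
    exact le_ciSup (Set.Finite.bddAbove (Set.finite_range (fun i => l i * p i))) m
  have hli1 : ∀ i, l i ≤ 1 := fun i =>
    hl1 ▸ Finset.single_le_sum (fun j _ => hl0 j) (Finset.mem_univ i)
  have hM0 : 0 ≤ M := mul_nonneg (hl0 m) (hp0 m).le
  have hMle : M ≤ p ⟨0, hn0⟩ := by
    calc M ≤ 1 * p m := mul_le_mul_of_nonneg_right (hli1 m) (hp0 m).le
      _ = p m := one_mul _
      _ ≤ p ⟨0, hn0⟩ := hsort ⟨0, hn0⟩ m (by simp [Fin.le_def])
  have hlM : ∀ i, l i ≤ M / p i := fun i => (le_div_iff₀ (hp0 i)).2 (hm i)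
  set T := (Finset.Icc 1 n).filter (fun k => M * stmt5S n p k ≤ 1) with hTdef
  have hS1 : stmt5S n p 1 = 1 / p ⟨0, hn0⟩ := by
    have h := stmt5S_succ p hn0
    have h0 : stmt5S n p 0 = 0 := by unfold stmt5S; simp
    rw [h0] at h
    simpa using h
  have h1T : (1 : ℕ) ∈ T := by
    simp only [hTdef, Finset.mem_filter, Finset.mem_Icc]
    refine ⟨⟨le_refl 1, by omega⟩, ?_⟩
    rw [hS1, mul_one_div, div_le_one (hp0 _)]
    exact hMle
  have hTne : T.Nonempty := ⟨1, h1T⟩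
  set k := T.max' hTne with hkdef
  have hkT : k ∈ T := T.max'_mem hTne
  have hkmem : (1 ≤ k ∧ k ≤ n) ∧ M * stmt5S n p k ≤ 1 := by
    simpa only [hTdef, Finset.mem_filter, Finset.mem_Icc] using hkT
  obtain ⟨⟨hk1, hkn⟩, hkS⟩ := hkmem
  have hSk : 0 < stmt5S n p k := stmt5S_pos hn0 p hp0 hk1
  rcases eq_or_lt_of_le hkn with heq | hlt
  · -- k = n
    refine ⟨n, by omega, le_rfl, ?_⟩
    rw [hsup]
    have hSn : 0 < stmt5S n p n := stmt5S_pos hn0 p hp0 (by omega)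
    have hMn : M * stmt5S n p n ≤ 1 := by rwa [heq] at hkS
    have hMub : M ≤ 1 / stmt5S n p n := (le_div_iff₀ hSn).2 hMn
    have hsum : (∑ i, l i * p i) ≤ (n : ℝ) * M := by
      calc (∑ i, l i * p i) ≤ ∑ _i : Fin n, M := Finset.sum_le_sum (fun i _ => hm i)
        _ = (n : ℝ) * M := by
          rw [Finset.sum_const, Finset.card_univ, Fintype.card_fin, nsmul_eq_mul]
    have hn1 : (0:ℝ) ≤ (n : ℝ) - 1 := by
      have : (2:ℝ) ≤ (n : ℝ) := by exact_mod_cast hn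
      linarith
    calc (∑ i, l i * p i) - M ≤ ((n:ℝ) - 1) * M := by linarith
      _ ≤ ((n:ℝ) - 1) * (1 / stmt5S n p n) := mul_le_mul_of_nonneg_left hMub hn1
      _ = ((n:ℝ) - 1) / stmt5S n p n := by rw [mul_one_div]
  · -- k < n
    set q : Fin n := ⟨k, hlt⟩ with hqdef
    have hknot : 1 < M * stmt5S n p (k + 1) := by
      by_contra hcon
      push_neg at hcon
      have hmem : k + 1 ∈ T := by
        simp only [hTdef, Finset.mem_filter, Finset.mem_Icc]
        exact ⟨⟨by omega, by omega⟩, hcon⟩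
      have := T.le_max' (k + 1) hmem
      omega
    have hSk1eq : stmt5S n p (k + 1) = stmt5S n p k + 1 / p q := stmt5S_succ p hlt
    have hSk1 : 0 < stmt5S n p (k + 1) := stmt5S_pos hn0 p hp0 (by omega)
    have hsplitp := Finset.sum_filter_add_sum_filter_not Finset.univ
      (fun i : Fin n => (i : ℕ) < k) (fun i => l i * p i)
    have hsplitl := Finset.sum_filter_add_sum_filter_not Finset.univ
      (fun i : Fin n => (i : ℕ) < k) l
    set F := Finset.univ.filter (fun i : Fin n => (i : ℕ) < k) with hFdef
    set G := Finset.univ.filter (fun i : Fin n => ¬ (i : ℕ) < k) with hGdef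
    have hSkF : stmt5S n p k = ∑ i ∈ F, 1 / p i := by rw [hFdef]; rfl
    have htail : ∑ i ∈ G, l i * p i ≤ (∑ i ∈ G, l i) * p q := by
      rw [Finset.sum_mul]
      apply Finset.sum_le_sum
      intro i hi
      have hik : k ≤ (i : ℕ) := by
        rw [hGdef] at hi
        simp only [Finset.mem_filter, Finset.mem_univ, true_and, not_lt] at hi
        exact hi
      exact mul_le_mul_of_nonneg_left (hsort q i (by simp [Fin.le_def, hqdef, hik])) (hl0 i)
    have h3 : ∑ i ∈ G, l i = 1 - ∑ i ∈ F, l i := by linarith [hsplitl, hl1]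
    rw [h3] at htail
    have hhead : ∑ i ∈ F, (l i * p i - p q * l i)
        ≤ (k : ℝ) * M - M * p q * stmt5S n p k := by
      have hterm : ∀ i ∈ F, l i * p i - p q * l i ≤ M - M * p q * (1 / p i) := by
        intro i hiF
        have hik : (i : ℕ) < k := by
          rw [hFdef] at hiF
          simpa only [Finset.mem_filter, Finset.mem_univ, true_and] using hiF
        have hpq : p q ≤ p i := hsort i q (by simp [Fin.le_def, hqdef]; omega)
        have h1 : l i * (p i - p q) ≤ (M / p i) * (p i - p q) :=
          mul_le_mul_of_nonneg_right (hlM i) (by linarith)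
        have h2 : (M / p i) * (p i - p q) = M - M * p q * (1 / p i) := by
          have hpi := (hp0 i).ne'
          field_simp
        linarith [h1, h2.le, h2.ge]
      calc ∑ i ∈ F, (l i * p i - p q * l i) ≤ ∑ i ∈ F, (M - M * p q * (1 / p i)) :=
            Finset.sum_le_sum hterm
        _ = (F.card : ℝ) * M - M * p q * ∑ i ∈ F, (1 / p i) := by
            rw [Finset.sum_sub_distrib, Finset.sum_const, nsmul_eq_mul, ← Finset.mul_sum]
        _ = (k : ℝ) * M - M * p q * stmt5S n p k := by
            rw [← hSkF, hFdef, stmt5_card (le_of_lt hlt)]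
    have hFsub : ∑ i ∈ F, l i * p i - p q * ∑ i ∈ F, l i = ∑ i ∈ F, (l i * p i - p q * l i) := by
      rw [Finset.sum_sub_distrib, Finset.mul_sum]
    have hcomb : (∑ i, l i * p i) - M
        ≤ M * ((k:ℝ) - 1 - p q * stmt5S n p k) + p q := by
      nlinarith [htail, hhead, hFsub, hsplitp]
    rcases le_or_gt 0 ((k:ℝ) - 1 - p q * stmt5S n p k) with hα | hα
    · refine ⟨k, hk1, hkn, ?_⟩
      rw [hsup]
      have hend : M * ((k:ℝ) - 1 - p q * stmt5S n p k) + p q ≤ ((k:ℝ) - 1) / stmt5S n p k := by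
        rw [le_div_iff₀ hSk]
        nlinarith [mul_nonneg hα (sub_nonneg.2 hkS)]
      linarith [hcomb, hend]
    · refine ⟨k + 1, by omega, by omega, ?_⟩
      rw [hsup]
      have hpq1 : p q * (1 / p q) = 1 := mul_one_div_cancel (ne_of_gt (hp0 q))
      have h2 : p q * stmt5S n p (k + 1) = p q * stmt5S n p k + 1 := by
        rw [hSk1eq, mul_add, hpq1]
      have h1 : ((k:ℝ) - 1 - p q * stmt5S n p k) * (M * stmt5S n p (k + 1) - 1) ≤ 0 :=
        mul_nonpos_of_nonpos_of_nonneg hα.le (by linarith [hknot])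
      have hend : M * ((k:ℝ) - 1 - p q * stmt5S n p k) + p q
          ≤ (((k:ℕ) + 1 : ℝ) - 1) / stmt5S n p (k + 1) := by
        rw [le_div_iff₀ hSk1]
        nlinarith [h1, h2]
      have hcast : (((k + 1 : ℕ) : ℝ) - 1) = (((k:ℕ) : ℝ) + 1 - 1) := by push_cast; ring
      rw [hcast]
      linarith [hcomb, hend]


/-- Correctness of Algorithm 1. The maximum over the simplex of
`U(λ) = ∑ λ i p i − max_i λ i p i` equals the maximum over `k ∈ {1,…,n}` of
`(k−1) / ∑_{j<k} (1/p j)`, and is attained by the balanced assignment on the top `k*`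
workers, `λ i = (1/p i)/(∑_{j<k*} 1/p j)`. -/
theorem stmt_5 (n : ℕ) (hn : 2 ≤ n)
    (p : Fin n → ℝ) (hp : ∀ i, 1 / 2 ≤ p i ∧ p i ≤ 1)
    (hsort : ∀ i j : Fin n, i ≤ j → p j ≤ p i) :
    ∃ v : ℝ,
      IsGreatest {x : ℝ | ∃ l : Fin n → ℝ, (∀ i, 0 ≤ l i) ∧ (∑ i, l i = 1) ∧
        x = (∑ i, l i * p i) - ⨆ i, l i * p i} v ∧
      IsGreatest {y : ℝ | ∃ k : ℕ, 1 ≤ k ∧ k ≤ n ∧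
        y = ((k : ℝ) - 1) /
          ∑ j ∈ Finset.univ.filter (fun j : Fin n => (j : ℕ) < k), 1 / p j} v ∧
      ∃ k : ℕ, 1 ≤ k ∧ k ≤ n ∧
        v = ((k : ℝ) - 1) /
          ∑ j ∈ Finset.univ.filter (fun j : Fin n => (j : ℕ) < k), 1 / p j ∧
        (let V : ℝ := ∑ j ∈ Finset.univ.filter (fun j : Fin n => (j : ℕ) < k), 1 / p j
         let l : Fin n → ℝ := fun i => if (i : ℕ) < k then (1 / p i) / V else 0
         (∀ i, 0 ≤ l i) ∧ (∑ i, l i = 1) ∧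
           ((∑ i, l i * p i) - ⨆ i, l i * p i) = v) := by
  have hn0 : 0 < n := by omega
  haveI : Nonempty (Fin n) := ⟨⟨0, hn0⟩⟩
  have hp0 : ∀ i, (0:ℝ) < p i := fun i => lt_of_lt_of_le (by norm_num) (hp i).1
  obtain ⟨k₀, hk₀mem, hk₀max⟩ := (Finset.Icc 1 n).exists_max_image
    (fun k => ((k : ℝ) - 1) / stmt5S n p k) ⟨1, by rw [Finset.mem_Icc]; omega⟩
  rw [Finset.mem_Icc] at hk₀mem
  obtain ⟨hk₀1, hk₀n⟩ := hk₀mem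
  obtain ⟨hl0, hlsum, hUeq⟩ := stmt5_attain hn0 p hp0 hk₀1 hk₀n
  refine ⟨((k₀ : ℝ) - 1) / stmt5S n p k₀,
    ⟨⟨_, hl0, hlsum, hUeq.symm⟩, ?_⟩, ⟨⟨k₀, hk₀1, hk₀n, rfl⟩, ?_⟩,
    k₀, hk₀1, hk₀n, rfl, hl0, hlsum, hUeq⟩
  · rintro x ⟨w, hw0, hw1, rfl⟩
    obtain ⟨k, h1, h2, hle⟩ := stmt5_upper hn p hp hsort w hw0 hw1
    exact hle.trans (hk₀max k (Finset.mem_Icc.2 ⟨h1, h2⟩))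
  · rintro y ⟨k, h1, h2, rfl⟩
    exact hk₀max k (Finset.mem_Icc.2 ⟨h1, h2⟩)
end

section
/- Let n ≥ 2, m ≥ 1, and let p : Fin n → ℝ satisfy 1/2 ≤ p i ≤ 1 for all i and be sorted in decreasing order (i ≤ j → p i ≥ p j). Define D(s) = (∑ i, s i * p i) − max_i (s i * p i) on the set A = {s : Fin n → ℕ | ∑ i, s i = m} of deterministic assignments. Suppose s* maximizes D over A and s* i > 0 for some index i > 0 while s* (i−1) = 0. Then there exists s' maximizing D over A with s' (i−1) > 0. -/
/-- Proposition 6. If an optimal deterministic assignment gives tasks to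
worker `i > 0` but none to worker `i - 1`, then there is an optimal deterministic
assignment giving at least one task to worker `i - 1`. -/
theorem stmt_6 (n m : ℕ) (hn : 2 ≤ n) (hm : 1 ≤ m)
    (p : Fin n → ℝ) (hp : ∀ i, 1 / 2 ≤ p i ∧ p i ≤ 1)
    (hsort : ∀ i j : Fin n, i ≤ j → p j ≤ p i)
    (D : (Fin n → ℕ) → ℝ)
    (hD : ∀ s : Fin n → ℕ, D s = (∑ i, (s i : ℝ) * p i) - ⨆ i, (s i : ℝ) * p i)
    (sstar : Fin n → ℕ) (hsum : ∑ i, sstar i = m)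
    (hopt : ∀ s : Fin n → ℕ, (∑ i, s i = m) → D s ≤ D sstar)
    (i j : Fin n) (hij : (j : ℕ) + 1 = (i : ℕ))
    (hi : 0 < sstar i) (hj : sstar j = 0) :
    ∃ s' : Fin n → ℕ, (∑ k, s' k = m) ∧
      (∀ s : Fin n → ℕ, (∑ k, s k = m) → D s ≤ D s') ∧
      0 < s' j := by
  haveI : Nonempty (Fin n) := ⟨i⟩
  have hji : j ≠ i := by
    intro h; rw [h] at hij; omega
  set s' : Fin n → ℕ := fun k => if k = i then 0 else if k = j then sstar i else sstar k
    with hs'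
  have hs'j : s' j = sstar i := by simp [hs', hji]
  have hs'i : s' i = 0 := by simp [hs']
  have hs'k : ∀ k, k ≠ i → k ≠ j → s' k = sstar k := by
    intro k h1 h2; simp [hs', h1, h2]
  -- sum preserved
  have hsum' : ∑ k, s' k = m := by
    rw [← hsum]
    refine Fintype.sum_equiv (Equiv.swap i j) _ _ ?_
    intro k
    rcases eq_or_ne k i with rfl | h1
    · rw [Equiv.swap_apply_left, hs'i, hj]
    rcases eq_or_ne k j with rfl | h2
    · rw [Equiv.swap_apply_right, hs'j]
    · rw [Equiv.swap_apply_of_ne_of_ne h1 h2, hs'k k h1 h2]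
  have hpj : p i ≤ p j := hsort j i (by omega)
  have hΔ : (0:ℝ) ≤ (sstar i : ℝ) * p j - (sstar i : ℝ) * p i := by
    have : (0:ℝ) ≤ (sstar i : ℝ) := Nat.cast_nonneg _
    nlinarith
  have bdd : BddAbove (Set.range fun k => (sstar k : ℝ) * p k) :=
    (Set.finite_range _).bddAbove
  have bdd' : BddAbove (Set.range fun k => (s' k : ℝ) * p k) :=
    (Set.finite_range _).bddAbove
  set M : ℝ := ⨆ k, (sstar k : ℝ) * p k with hM
  have hMle : ∀ k, (sstar k : ℝ) * p k ≤ M := fun k => le_ciSup bdd k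
  have hM0 : 0 ≤ M := by
    have := hMle j; rw [hj] at this; simpa using this
  -- sum of s' equals sum of sstar plus Δ
  have hS : (∑ k, (s' k : ℝ) * p k) =
      (∑ k, (sstar k : ℝ) * p k) + ((sstar i : ℝ) * p j - (sstar i : ℝ) * p i) := by
    have h1 : ∀ k ∈ Finset.univ \ {i, j}, (s' k : ℝ) * p k = (sstar k : ℝ) * p k := by
      intro k hk
      simp only [Finset.mem_sdiff, Finset.mem_insert, Finset.mem_singleton] at hk
      rw [hs'k k (fun h => hk.2 (Or.inl h)) (fun h => hk.2 (Or.inr h))]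
    have hijsub : ({i, j} : Finset (Fin n)) ⊆ Finset.univ := Finset.subset_univ _
    rw [← Finset.sum_sdiff hijsub, ← Finset.sum_sdiff hijsub,
      Finset.sum_congr rfl h1]
    have hij2 : Finset.sum {i, j} (fun k => (s' k : ℝ) * p k) =
        (s' i : ℝ) * p i + (s' j : ℝ) * p j := by
      rw [Finset.sum_insert (by simpa using hji.symm), Finset.sum_singleton]
    have hij3 : Finset.sum {i, j} (fun k => (sstar k : ℝ) * p k) =
        (sstar i : ℝ) * p i + (sstar j : ℝ) * p j := by
      rw [Finset.sum_insert (by simpa using hji.symm), Finset.sum_singleton]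
    rw [hij2, hij3, hs'i, hs'j, hj]
    push_cast
    ring
  -- new sup bounded
  have hM' : (⨆ k, (s' k : ℝ) * p k) ≤ M + ((sstar i : ℝ) * p j - (sstar i : ℝ) * p i) := by
    refine ciSup_le fun k => ?_
    rcases eq_or_ne k i with rfl | h1
    · rw [hs'i]; simpa using add_nonneg hM0 hΔ
    rcases eq_or_ne k j with rfl | h2
    · rw [hs'j]
      have := hMle i
      linarith
    · rw [hs'k k h1 h2]
      have := hMle k
      linarith
  have hDs' : D sstar ≤ D s' := by
    rw [hD, hD, ← hM, hS]
    linarith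
  exact ⟨s', hsum', fun s hs => le_trans (hopt s hs) hDs',
    by rw [hs'j]; exact hi⟩
end

section
/- Let n ≥ 2, m ≥ 1, and let p : Fin n → ℝ satisfy 1/2 ≤ p i ≤ 1 for all i and be sorted in decreasing order (i ≤ j → p i ≥ p j). Define D(s) = (∑ i, s i * p i) − max_i (s i * p i) on the set A = {s : Fin n → ℕ | ∑ i, s i = m}. Then there exists a maximizer s* of D over A whose support is an initial segment of the workers: there is k with 1 ≤ k ≤ n such that s* i > 0 for all i < k and s* i = 0 for all i ≥ k. -/
private lemma sum_split_two {α : Type*} [AddCommMonoid α] {n : ℕ} {i j : Fin n}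
    (hij : i ≠ j) (f : Fin n → α) :
    ∑ t, f t = f i + (f j + ∑ t ∈ (Finset.univ.erase i).erase j, f t) := by
  rw [Finset.add_sum_erase _ f (Finset.mem_erase.mpr ⟨hij.symm, Finset.mem_univ j⟩),
    Finset.add_sum_erase _ f (Finset.mem_univ i)]

/-- There is an optimal deterministic assignment whose support is an
initial segment of the workers (the `k` most proficient workers, for some `1 ≤ k ≤ n`). -/
theorem stmt_7 (n m : ℕ) (hn : 2 ≤ n) (hm : 1 ≤ m)
    (p : Fin n → ℝ) (hp : ∀ i, 1 / 2 ≤ p i ∧ p i ≤ 1)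
    (hsort : ∀ i j : Fin n, i ≤ j → p j ≤ p i) :
    ∃ sstar : Fin n → ℕ, (∑ i, sstar i = m) ∧
      (∀ s : Fin n → ℕ, (∑ i, s i = m) →
        ((∑ i, (s i : ℝ) * p i) - ⨆ i, (s i : ℝ) * p i)
          ≤ ((∑ i, (sstar i : ℝ) * p i) - ⨆ i, (sstar i : ℝ) * p i)) ∧
      ∃ k : ℕ, 1 ≤ k ∧ k ≤ n ∧
        (∀ i : Fin n, (i : ℕ) < k → 0 < sstar i) ∧
        (∀ i : Fin n, k ≤ (i : ℕ) → sstar i = 0) := by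
  have hn0 : 0 < n := by omega
  haveI : Nonempty (Fin n) := ⟨⟨0, hn0⟩⟩
  set A : Finset (Fin n → ℕ) := Finset.Nat.antidiagonalTuple n m with hA
  have memA : ∀ s : Fin n → ℕ, s ∈ A ↔ ∑ i, s i = m := fun s =>
    Finset.Nat.mem_antidiagonalTuple
  set D : (Fin n → ℕ) → ℝ :=
    fun s => (∑ i, (s i : ℝ) * p i) - ⨆ i, (s i : ℝ) * p i with hD
  set Φ : (Fin n → ℕ) → ℕ := fun s => ∑ i, s i * (i : ℕ) with hΦ
  -- A is nonempty
  have hAne : A.Nonempty := by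
    refine ⟨fun t => if t = ⟨0, hn0⟩ then m else 0, (memA _).mpr ?_⟩
    simp [Finset.sum_ite_eq']
  obtain ⟨s₁, hs₁A, hs₁max⟩ := A.exists_max_image D hAne
  set B : Finset (Fin n → ℕ) := A.filter (fun s => D s₁ ≤ D s) with hB
  have hBne : B.Nonempty := ⟨s₁, Finset.mem_filter.mpr ⟨hs₁A, le_refl _⟩⟩
  obtain ⟨s, hsB, hsmin⟩ := B.exists_min_image Φ hBne
  have hsA : s ∈ A := (Finset.mem_filter.mp hsB).1
  have hsDs₁ : D s₁ ≤ D s := (Finset.mem_filter.mp hsB).2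
  have hsum : ∑ i, s i = m := (memA s).mp hsA
  have hmax : ∀ t : Fin n → ℕ, (∑ i, t i = m) → D t ≤ D s := by
    intro t ht
    exact le_trans (hs₁max t ((memA t).mpr ht)) hsDs₁
  -- s has downward-closed support
  have hdc : ∀ i j : Fin n, i < j → 0 < s j → 0 < s i := by
    intro i j hij hsj
    by_contra hsi
    have hsi0 : s i = 0 := by omega
    have hijne : i ≠ j := ne_of_lt hij
    have hijN : (i : ℕ) < (j : ℕ) := hij
    set s' : Fin n → ℕ := fun t => if t = j then 0 else if t = i then s j else s t with hs'
    have hs'i : s' i = s j := by simp [hs', hijne]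
    have hs'j : s' j = 0 := by simp [hs']
    have hs'other : ∀ t ∈ (Finset.univ.erase i).erase j, s' t = s t := by
      intro t ht
      have htj : t ≠ j := (Finset.mem_erase.mp ht).1
      have hti : t ≠ i := (Finset.mem_erase.mp (Finset.mem_erase.mp ht).2).1
      simp [hs', htj, hti]
    -- sum preserved
    have hsum' : ∑ i, s' i = m := by
      have e1 := sum_split_two hijne s'
      have e2 := sum_split_two hijne s
      have tailEq : ∑ t ∈ (Finset.univ.erase i).erase j, s' t
          = ∑ t ∈ (Finset.univ.erase i).erase j, s t :=
        Finset.sum_congr rfl hs'other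
      rw [hs'i, hs'j, tailEq] at e1
      rw [hsi0] at e2
      omega
    -- Φ strictly decreases
    have hΦlt : Φ s' < Φ s := by
      show (∑ t, s' t * (t : ℕ)) < ∑ t, s t * (t : ℕ)
      have e1 := sum_split_two hijne (fun t => s' t * (t : ℕ))
      have e2 := sum_split_two hijne (fun t => s t * (t : ℕ))
      simp only [hs'i, hs'j, hsi0, Nat.zero_mul] at e1 e2
      have tailEq : ∑ t ∈ (Finset.univ.erase i).erase j, s' t * (t : ℕ)
          = ∑ t ∈ (Finset.univ.erase i).erase j, s t * (t : ℕ) :=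
        Finset.sum_congr rfl (fun t ht => by rw [hs'other t ht])
      rw [tailEq] at e1
      have hlt : s j * (i : ℕ) < s j * (j : ℕ) :=
        (Nat.mul_lt_mul_left hsj).mpr hijN
      omega
    -- D does not decrease
    have hpij : p j ≤ p i := hsort i j (le_of_lt hij)
    set c : ℝ := (s j : ℝ) * p i - (s j : ℝ) * p j with hc
    have hc0 : 0 ≤ c := by
      have h0 : (0:ℝ) ≤ (s j : ℝ) := Nat.cast_nonneg _
      nlinarith
    have hbdd : BddAbove (Set.range fun t => (s t : ℝ) * p t) :=
      Set.Finite.bddAbove (Set.finite_range _)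
    have hMge : ∀ t, (s t : ℝ) * p t ≤ ⨆ t, (s t : ℝ) * p t :=
      fun t => le_ciSup hbdd t
    have hM0 : (0:ℝ) ≤ ⨆ t, (s t : ℝ) * p t := by
      have h := hMge i
      rw [hsi0] at h
      simpa using h
    have hsup' : (⨆ t, (s' t : ℝ) * p t) ≤ (⨆ t, (s t : ℝ) * p t) + c := by
      apply ciSup_le
      intro t
      by_cases htj : t = j
      · subst htj; rw [hs'j]; simpa using add_nonneg hM0 hc0
      · by_cases hti : t = i
        · subst hti
          rw [hs'i]
          have h := hMge j
          rw [hc]; linarith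
        · have h : s' t = s t := by simp [hs', htj, hti]
          rw [h]
          exact le_trans (hMge t) (by linarith)
    have hsumR : ∑ t, (s' t : ℝ) * p t = (∑ t, (s t : ℝ) * p t) + c := by
      have e1 := sum_split_two hijne (fun t => (s' t : ℝ) * p t)
      have e2 := sum_split_two hijne (fun t => (s t : ℝ) * p t)
      simp only [hs'i, hs'j, hsi0, Nat.cast_zero, zero_mul, Nat.cast_ofNat] at e1 e2
      have tailEq : ∑ t ∈ (Finset.univ.erase i).erase j, (s' t : ℝ) * p t
          = ∑ t ∈ (Finset.univ.erase i).erase j, (s t : ℝ) * p t :=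
        Finset.sum_congr rfl (fun t ht => by rw [hs'other t ht])
      rw [tailEq] at e1
      rw [e1, e2, hc]
      push_cast
      ring
    have hDle : D s ≤ D s' := by
      show (∑ t, (s t : ℝ) * p t) - (⨆ t, (s t : ℝ) * p t)
          ≤ (∑ t, (s' t : ℝ) * p t) - (⨆ t, (s' t : ℝ) * p t)
      rw [hsumR]
      linarith
    -- contradiction with minimality
    have hs'B : s' ∈ B := Finset.mem_filter.mpr ⟨(memA s').mpr hsum', le_trans hsDs₁ hDle⟩
    exact absurd (hsmin s' hs'B) (by omega)
  -- not all zero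
  have hex : ∃ j : Fin n, 0 < s j := by
    by_contra h
    push_neg at h
    have h0 : ∑ i, s i = 0 := Finset.sum_eq_zero (fun i _ => by have := h i; omega)
    omega
  -- construct k
  refine ⟨s, hsum, hmax, ?_⟩
  by_cases hall : ∀ i : Fin n, 0 < s i
  · exact ⟨n, by omega, le_refl n, fun i _ => hall i, fun i hi => absurd i.isLt (by omega)⟩
  · push_neg at hall
    obtain ⟨i₀, hi₀⟩ := hall
    set Z : Finset (Fin n) := Finset.univ.filter (fun i => s i = 0) with hZ
    have hZne : Z.Nonempty := ⟨i₀, Finset.mem_filter.mpr ⟨Finset.mem_univ _, by omega⟩⟩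
    set z := Z.min' hZne with hz
    have hzZ : s z = 0 := (Finset.mem_filter.mp (Z.min'_mem hZne)).2
    refine ⟨(z : ℕ), ?_, by omega, ?_, ?_⟩
    · -- 1 ≤ z : z ≠ 0
      by_contra h
      have hz0 : (z : ℕ) = 0 := by omega
      obtain ⟨j, hj⟩ := hex
      rcases eq_or_lt_of_le (show z ≤ j from by
        rw [Fin.le_def, hz0]; omega) with heq | hlt
      · rw [heq] at hzZ; omega
      · have := hdc z j hlt hj; omega
    · intro i hi
      by_contra h
      have hiZ : i ∈ Z := Finset.mem_filter.mpr ⟨Finset.mem_univ _, by omega⟩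
      have hle := Z.min'_le i hiZ
      rw [Fin.le_def] at hle
      omega
    · intro i hi
      rcases eq_or_lt_of_le (show z ≤ i from by rw [Fin.le_def]; omega) with heq | hlt
      · rw [← heq]; exact hzZ
      · by_contra h
        have := hdc z i hlt (by omega)
        omega
end

section
/- Let there be n workers with proficiencies p : Fin n → ℝ, 1/2 ≤ p i ≤ 1, and m tasks with nonnegative utilities u : Fin m → ℝ with total U_tot = ∑ t, u t > 0. Let q be a finitely supported probability distribution over single-worker-per-task assignments f : Fin m → Fin n, and let a be the attacked worker. Define λ w = (∑_f q f · ∑_{t : f t = w} u t) / U_tot. Then λ is a probability distribution on Fin n (λ w ≥ 0 and ∑ w, λ w = 1), and U_tot · ∑_{w ≠ a} p w · λ w = ∑_f q f · ∑_{t : f t ≠ a} u t · p (f t); that is, the distribution λ over unit assignments (assigning all tasks to worker w with probability λ w) yields the same defender utility against the attack on a as q does. -/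
/-- Proposition 7 (representation, heterogeneous tasks, one worker per task).
Any distribution `q` over assignments `f : Fin m → Fin n` is utility-equivalent, against an
attack on worker `a`, to the distribution over unit assignments
`lam w = (∑_f q f · ∑_{t : f t = w} u t) / U_tot`. -/
theorem stmt_9 (n m : ℕ) (hn : 1 ≤ n)
    (p : Fin n → ℝ) (hp : ∀ i, 1 / 2 ≤ p i ∧ p i ≤ 1)
    (u : Fin m → ℝ) (hu : ∀ t, 0 ≤ u t)
    (Utot : ℝ) (hUtot : Utot = ∑ t, u t) (hUpos : 0 < Utot)
    (q : (Fin m → Fin n) → ℝ) (hq0 : ∀ f, 0 ≤ q f) (hq1 : ∑ f, q f = 1)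
    (a : Fin n)
    (lam : Fin n → ℝ)
    (hlam : ∀ w, lam w
      = (∑ f, q f * ∑ t ∈ Finset.univ.filter (fun t => f t = w), u t) / Utot) :
    (∀ w, 0 ≤ lam w) ∧ (∑ w, lam w = 1) ∧
      Utot * ∑ w ∈ Finset.univ.filter (fun w => w ≠ a), p w * lam w
        = ∑ f, q f * ∑ t ∈ Finset.univ.filter (fun t => f t ≠ a), u t * p (f t) := by
  have hS : ∀ w, 0 ≤ ∑ f, q f * ∑ t ∈ Finset.univ.filter (fun t => f t = w), u t := by
    intro w
    exact Finset.sum_nonneg fun f _ =>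
      mul_nonneg (hq0 f) (Finset.sum_nonneg fun t _ => hu t)
  have hlam' : ∀ w, Utot * lam w
      = ∑ f, q f * ∑ t ∈ Finset.univ.filter (fun t => f t = w), u t := by
    intro w; rw [hlam]; field_simp
  have key : ∀ f : Fin m → Fin n,
      ∑ w ∈ Finset.univ.filter (fun w => w ≠ a),
        p w * ∑ t ∈ Finset.univ.filter (fun t => f t = w), u t
      = ∑ t ∈ Finset.univ.filter (fun t => f t ≠ a), u t * p (f t) := by
    intro f
    rw [← Finset.sum_fiberwise_of_maps_to (g := f)
      (t := Finset.univ.filter (fun w => w ≠ a))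
      (fun t ht => by
        simp only [Finset.mem_filter, Finset.mem_univ, true_and] at ht ⊢; exact ht)
      (fun t => u t * p (f t))]
    refine Finset.sum_congr rfl fun w hw => ?_
    simp only [Finset.mem_filter, Finset.mem_univ, true_and] at hw
    rw [Finset.filter_filter]
    have : (Finset.univ.filter fun t => f t ≠ a ∧ f t = w)
        = Finset.univ.filter fun t => f t = w := by
      apply Finset.filter_congr
      intro t _
      constructor
      · exact fun h => h.2
      · exact fun h => ⟨by rw [h]; exact hw, h⟩
    rw [this, Finset.mul_sum]
    refine Finset.sum_congr rfl fun t ht => ?_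
    simp only [Finset.mem_filter] at ht
    rw [ht.2]; ring
  refine ⟨fun w => by rw [hlam]; exact div_nonneg (hS w) hUpos.le, ?_, ?_⟩
  · have h1 : Utot * ∑ w, lam w = Utot := by
      rw [Finset.mul_sum]
      calc ∑ w, Utot * lam w
          = ∑ w, ∑ f, q f * ∑ t ∈ Finset.univ.filter (fun t => f t = w), u t := by
            exact Finset.sum_congr rfl fun w _ => hlam' w
        _ = ∑ f, ∑ w, q f * ∑ t ∈ Finset.univ.filter (fun t => f t = w), u t :=
            Finset.sum_comm
        _ = ∑ f, q f * ∑ w, ∑ t ∈ Finset.univ.filter (fun t => f t = w), u t := by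
            simp [Finset.mul_sum]
        _ = ∑ f, q f * Utot := by
            refine Finset.sum_congr rfl fun f _ => ?_
            rw [Finset.sum_fiberwise, hUtot]
        _ = Utot := by rw [← Finset.sum_mul, hq1, one_mul]
    have := mul_left_cancel₀ (ne_of_gt hUpos) (h1.trans (mul_one Utot).symm)
    exact this
  · rw [Finset.mul_sum]
    calc ∑ w ∈ Finset.univ.filter (fun w => w ≠ a), Utot * (p w * lam w)
        = ∑ w ∈ Finset.univ.filter (fun w => w ≠ a),
            p w * ∑ f, q f * ∑ t ∈ Finset.univ.filter (fun t => f t = w), u t := by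
          refine Finset.sum_congr rfl fun w _ => ?_
          rw [← hlam' w]; ring
      _ = ∑ w ∈ Finset.univ.filter (fun w => w ≠ a), ∑ f,
            q f * (p w * ∑ t ∈ Finset.univ.filter (fun t => f t = w), u t) := by
          refine Finset.sum_congr rfl fun w _ => ?_
          rw [Finset.mul_sum]
          exact Finset.sum_congr rfl fun f _ => by ring
      _ = ∑ f, ∑ w ∈ Finset.univ.filter (fun w => w ≠ a),
            q f * (p w * ∑ t ∈ Finset.univ.filter (fun t => f t = w), u t) :=
          Finset.sum_comm
      _ = ∑ f, q f * ∑ t ∈ Finset.univ.filter (fun t => f t ≠ a), u t * p (f t) := by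
          refine Finset.sum_congr rfl fun f _ => ?_
          rw [← Finset.mul_sum, key f]
end

section
/- Let n ≥ 2 and let p : Fin n → ℝ satisfy 1/2 ≤ p i ≤ 1 for all i and be sorted in decreasing order (i ≤ j → p i ≥ p j). Let tasks have nonnegative utilities u : Fin m → ℝ with total U_tot = ∑ t, u t. Restricted to randomized strategies over single-worker-per-task assignments, the defender's optimal expected utility under a best-responding attacker equals U_tot · max_{1 ≤ k ≤ n} (k − 1) / (∑_{j < k} 1/p j); equivalently, the maximum over the standard simplex of U_tot · ((∑ i, λ i * p i) − max_i (λ i * p i)) equals this value. -/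
lemma card_filter_lt' {n k : ℕ} (hk : k ≤ n) :
    (Finset.univ.filter (fun i : Fin n => (i:ℕ) < k)).card = k := by
  have : (Finset.univ.filter (fun i : Fin n => (i:ℕ) < k)) =
      Finset.map (Fin.castLEEmb hk) Finset.univ := by
    ext i
    simp only [Finset.mem_filter, Finset.mem_univ, true_and, Finset.mem_map,
      Fin.castLEEmb, Function.Embedding.coeFn_mk]
    constructor
    · intro h; exact ⟨⟨i, h⟩, rfl⟩
    · rintro ⟨j, rfl⟩; exact j.2
  rw [this, Finset.card_map, Finset.card_univ, Fintype.card_fin]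

lemma lower_eq_filter' {n : ℕ} (P : Finset (Fin n))
    (hP : ∀ i j : Fin n, i ≤ j → j ∈ P → i ∈ P) :
    P = Finset.univ.filter (fun i : Fin n => (i:ℕ) < P.card) := by
  ext i
  simp only [Finset.mem_filter, Finset.mem_univ, true_and]
  constructor
  · intro hi
    have hsub : Finset.Iic i ⊆ P := fun j hj => hP j i (Finset.mem_Iic.mp hj) hi
    have := Finset.card_le_card hsub
    rw [Fin.card_Iic] at this
    omega
  · intro hi
    by_contra hni
    have hsub : P ⊆ Finset.Iio i := by
      intro j hj
      rw [Finset.mem_Iio]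
      by_contra hij
      exact hni (hP i j (le_of_not_gt hij) hj)
    have := Finset.card_le_card hsub
    rw [Fin.card_Iio] at this
    omega


/-- With heterogeneous tasks and a single worker per task, the defender's
optimal expected utility over randomized strategies under a best-responding attacker
equals `U_tot · max_{1 ≤ k ≤ n} (k−1)/∑_{j<k} 1/p j`; equivalently, the maximum over
the simplex of `U_tot · ((∑ i, λ i p i) − max_i λ i p i)` equals this value. -/
theorem stmt_10 (n m : ℕ) (hn : 2 ≤ n)
    (p : Fin n → ℝ) (hp : ∀ i, 1 / 2 ≤ p i ∧ p i ≤ 1)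
    (hsort : ∀ i j : Fin n, i ≤ j → p j ≤ p i)
    (u : Fin m → ℝ) (hu : ∀ t, 0 ≤ u t)
    (Utot : ℝ) (hUtot : Utot = ∑ t, u t) :
    ∃ v : ℝ,
      IsGreatest {y : ℝ | ∃ k : ℕ, 1 ≤ k ∧ k ≤ n ∧
        y = ((k : ℝ) - 1) /
          ∑ j ∈ Finset.univ.filter (fun j : Fin n => (j : ℕ) < k), 1 / p j} v ∧
      IsGreatest {x : ℝ | ∃ l : Fin n → ℝ, (∀ i, 0 ≤ l i) ∧ (∑ i, l i = 1) ∧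
        x = Utot * ((∑ i, l i * p i) - ⨆ i, l i * p i)} (Utot * v) ∧
      IsGreatest {x : ℝ | ∃ q : (Fin m → Fin n) → ℝ,
        (∀ f, 0 ≤ q f) ∧ (∑ f, q f = 1) ∧
        x = ⨅ a : Fin n,
          ∑ f, q f * ∑ t ∈ Finset.univ.filter (fun t => f t ≠ a), u t * p (f t)}
        (Utot * v) := by
  have hn0 : 0 < n := by omega
  haveI : Nonempty (Fin n) := ⟨⟨0, hn0⟩⟩
  have hp0 : ∀ i, (0:ℝ) < p i := fun i => lt_of_lt_of_le (by norm_num) (hp i).1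
  have hpne : ∀ i, p i ≠ 0 := fun i => (hp0 i).ne'
  set S : ℕ → ℝ := fun k => ∑ j ∈ Finset.univ.filter (fun j : Fin n => (j:ℕ) < k), 1 / p j
    with hSdef
  have hSpos : ∀ k, 1 ≤ k → 0 < S k := by
    intro k hk
    apply Finset.sum_pos
    · intro j _; exact one_div_pos.mpr (hp0 j)
    · exact ⟨⟨0, hn0⟩, by simp; omega⟩
  set g : ℕ → ℝ := fun k => ((k:ℝ) - 1) / S k with hgdef
  obtain ⟨k0, hk0mem, hk0max⟩ := Finset.exists_max_image (Finset.Icc 1 n) g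
    ⟨1, by simp; omega⟩
  obtain ⟨hk01, hk0n⟩ := Finset.mem_Icc.mp hk0mem

  have hv0 : 0 ≤ g k0 := by
    have h1 := hk0max 1 (Finset.mem_Icc.mpr ⟨le_refl 1, by omega⟩)
    have : g 1 = 0 := by simp [hgdef]
    linarith
  have hvk : ∀ k, 1 ≤ k → k ≤ n → (k:ℝ) - 1 ≤ g k0 * S k := by
    intro k h1 h2
    have := hk0max k (Finset.mem_Icc.mpr ⟨h1, h2⟩)
    rw [hgdef] at this
    have hS := hSpos k h1
    calc (k:ℝ) - 1 = (((k:ℝ) - 1) / S k) * S k := by field_simp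
    _ ≤ g k0 * S k := by
        apply mul_le_mul_of_nonneg_right _ hS.le
        exact this
  have hUtot0 : 0 ≤ Utot := hUtot ▸ Finset.sum_nonneg (fun t _ => hu t)
  -- the optimal unit-assignment distribution
  set l0 : Fin n → ℝ := fun i => if (i:ℕ) < k0 then (1 / p i) / S k0 else 0 with hl0def
  have hSk0 : (0:ℝ) < S k0 := hSpos k0 hk01
  have hl0nn : ∀ i, 0 ≤ l0 i := by
    intro i
    rw [hl0def]
    dsimp only
    split
    · exact div_nonneg (div_nonneg one_pos.le (hp0 i).le) hSk0.le
    · exact le_refl 0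
  have hl0sum : ∑ i, l0 i = 1 := by
    rw [hl0def]
    rw [← Finset.sum_filter, ← Finset.sum_div]
    exact div_self hSk0.ne'
  have hl0p : ∀ i, l0 i * p i = if (i:ℕ) < k0 then 1 / S k0 else 0 := by
    intro i
    rw [hl0def]
    dsimp only
    split
    · field_simp
      exact div_self (hpne i)
    · ring
  have hl0sup : (⨆ i, l0 i * p i) = 1 / S k0 := by
    apply le_antisymm
    · apply ciSup_le
      intro i
      rw [hl0p]
      split
      · exact le_refl _
      · positivity
    · have hle := le_ciSup (f := fun i => l0 i * p i)
        (Set.Finite.bddAbove (Set.finite_range _)) ⟨0, hn0⟩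
      rw [hl0p] at hle
      have hk0pos : 0 < k0 := hk01
      simpa [hk0pos, one_div] using hle
  have hl0sumP : ∑ i, l0 i * p i = (k0:ℝ) / S k0 := by
    calc ∑ i, l0 i * p i = ∑ i : Fin n, if (i:ℕ) < k0 then 1 / S k0 else 0 := by
          exact Finset.sum_congr rfl (fun i _ => hl0p i)
    _ = ∑ i ∈ Finset.univ.filter (fun i : Fin n => (i:ℕ) < k0), (1 / S k0 : ℝ) :=
          (Finset.sum_filter (fun i : Fin n => (i:ℕ) < k0) (fun _ => (1 / S k0 : ℝ))).symm
    _ = (k0:ℝ) / S k0 := by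
          rw [Finset.sum_const, card_filter_lt' hk0n, nsmul_eq_mul]
          ring
  have hval : (k0:ℝ) / S k0 - 1 / S k0 = g k0 := by
    rw [hgdef]
    dsimp only
    rw [sub_div]
  -- part 2 upper bound, as a reusable fact
  have part2ub : ∀ l : Fin n → ℝ, (∀ i, 0 ≤ l i) → (∑ i, l i = 1) →
      Utot * ((∑ i, l i * p i) - ⨆ i, l i * p i) ≤ Utot * g k0 := by
    intro l hlnn hlsum
    apply mul_le_mul_of_nonneg_left _ hUtot0
    set M := ⨆ i, l i * p i with hMdef
    have hM : ∀ i, l i * p i ≤ M := fun i =>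
      le_ciSup (f := fun i => l i * p i) (Set.Finite.bddAbove (Set.finite_range _)) i
    have hM0 : 0 ≤ M :=
      le_trans (mul_nonneg (hlnn ⟨0, hn0⟩) (hp0 ⟨0, hn0⟩).le) (hM ⟨0, hn0⟩)
    set a : Fin n → ℝ := fun i => 1 - g k0 / p i with hadef
    set P := Finset.univ.filter (fun i : Fin n => 0 ≤ a i) with hPdef
    have hPlow : ∀ i j : Fin n, i ≤ j → j ∈ P → i ∈ P := by
      intro i j hij hj
      rw [hPdef, Finset.mem_filter] at hj ⊢
      refine ⟨Finset.mem_univ _, ?_⟩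
      have hd : g k0 / p i ≤ g k0 / p j :=
        div_le_div_of_nonneg_left hv0 (hp0 j) (hsort i j hij)
      have := hj.2
      rw [hadef] at this ⊢
      dsimp only at this ⊢
      linarith
    have hPn : P.card ≤ n := by
      have := Finset.card_le_univ P
      simpa using this
    have hsumP : ∑ i ∈ P, a i ≤ 1 := by
      rcases Nat.eq_zero_or_pos P.card with h0 | h1
      · rw [Finset.card_eq_zero.mp h0]
        simp
      · have heq : ∑ i ∈ P, a i = (P.card : ℝ) - g k0 * S P.card := by
          conv_lhs => rw [lower_eq_filter' P hPlow]
          rw [hadef]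
          dsimp only
          rw [Finset.sum_sub_distrib, Finset.sum_const, card_filter_lt' hPn, nsmul_eq_mul,
            mul_one, hSdef]
          dsimp only
          rw [Finset.mul_sum]
          congr 1
          apply Finset.sum_congr rfl
          intro i _
          rw [div_eq_mul_one_div]
        have := hvk P.card h1 hPn
        linarith
    have key : ∑ i, l i * p i - g k0 ≤ M := by
      have h1 : ∑ i, l i * p i - g k0 = ∑ i, (l i * p i) * a i := by
        have h2 : ∀ i : Fin n, (l i * p i) * a i = l i * p i - g k0 * l i := by
          intro i
          rw [hadef]
          dsimp only
          have hpi := hpne i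
          field_simp
        rw [Finset.sum_congr rfl (fun i _ => h2 i), Finset.sum_sub_distrib,
          ← Finset.mul_sum, hlsum, mul_one]
      rw [h1]
      have hsplit := Finset.sum_filter_add_sum_filter_not Finset.univ
        (fun i : Fin n => 0 ≤ a i) (fun i => (l i * p i) * a i)
      have hneg : ∑ i ∈ Finset.univ.filter (fun i : Fin n => ¬ 0 ≤ a i),
          (l i * p i) * a i ≤ 0 := by
        apply Finset.sum_nonpos
        intro i hi
        rw [Finset.mem_filter] at hi
        exact mul_nonpos_of_nonneg_of_nonpos
          (mul_nonneg (hlnn i) (hp0 i).le) (le_of_not_ge hi.2)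
      have hpos : ∑ i ∈ P, (l i * p i) * a i ≤ M := by
        calc ∑ i ∈ P, (l i * p i) * a i ≤ ∑ i ∈ P, M * a i := by
              apply Finset.sum_le_sum
              intro i hi
              rw [hPdef, Finset.mem_filter] at hi
              exact mul_le_mul_of_nonneg_right (hM i) hi.2
        _ = M * ∑ i ∈ P, a i := (Finset.mul_sum _ _ _).symm
        _ ≤ M * 1 := mul_le_mul_of_nonneg_left hsumP hM0
        _ = M := mul_one M
      rw [hPdef] at hpos
      linarith
    linarith
  refine ⟨g k0, ?_, ?_, ?_⟩
  · constructor
    · exact ⟨k0, hk01, hk0n, rfl⟩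
    · rintro y ⟨k, h1, h2, rfl⟩
      exact hk0max k (Finset.mem_Icc.mpr ⟨h1, h2⟩)
  · constructor
    · refine ⟨l0, hl0nn, hl0sum, ?_⟩
      rw [hl0sup, hl0sumP, hval]
    · rintro x ⟨l, hlnn, hlsum, rfl⟩
      exact part2ub l hlnn hlsum
  · constructor
    · -- membership: distribution over constant assignments with weights l0
      refine ⟨fun f => ∑ i, if f = (fun _ => i) then l0 i else 0, ?_, ?_, ?_⟩
      · intro f
        apply Finset.sum_nonneg
        intro i _
        split
        · exact hl0nn i
        · exact le_refl 0
      · rw [Finset.sum_comm]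
        calc ∑ i : Fin n, ∑ f : Fin m → Fin n, (if f = (fun _ => i) then l0 i else 0)
            = ∑ i : Fin n, l0 i := by
              apply Finset.sum_congr rfl
              intro i _
              rw [Finset.sum_ite_eq' Finset.univ (fun _ => i) (fun _ => l0 i)]
              simp
        _ = 1 := hl0sum
      · have hW : ∀ a i : Fin n,
            (∑ t ∈ Finset.univ.filter (fun t : Fin m => (fun _ : Fin m => i) t ≠ a),
              u t * p ((fun _ : Fin m => i) t)) = (if i = a then 0 else Utot * p i) := by
          intro a i
          by_cases hia : i = a
          · simp [hia]
          · simp only [hia, if_false]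
            rw [Finset.filter_true_of_mem (fun t _ => hia)]
            rw [← Finset.sum_mul, hUtot]
        have hpay : ∀ a : Fin n,
            (∑ f : Fin m → Fin n, (∑ i, if f = (fun _ => i) then l0 i else 0) *
              ∑ t ∈ Finset.univ.filter (fun t => f t ≠ a), u t * p (f t))
              = Utot * ((k0:ℝ)/S k0) - Utot * (l0 a * p a) := by
          intro a
          calc ∑ f : Fin m → Fin n, (∑ i, if f = (fun _ => i) then l0 i else 0) *
                ∑ t ∈ Finset.univ.filter (fun t => f t ≠ a), u t * p (f t)
              = ∑ f : Fin m → Fin n, ∑ i : Fin n, (if f = (fun _ => i) then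
                  l0 i * ∑ t ∈ Finset.univ.filter (fun t => f t ≠ a), u t * p (f t) else 0) := by
                apply Finset.sum_congr rfl; intro f _
                rw [Finset.sum_mul]
                apply Finset.sum_congr rfl; intro i _
                rw [ite_mul, zero_mul]
          _ = ∑ i : Fin n, ∑ f : Fin m → Fin n, (if f = (fun _ => i) then
                  l0 i * ∑ t ∈ Finset.univ.filter (fun t => f t ≠ a), u t * p (f t) else 0) :=
                Finset.sum_comm
          _ = ∑ i : Fin n, l0 i * ∑ t ∈ Finset.univ.filter
                (fun t : Fin m => (fun _ : Fin m => i) t ≠ a), u t * p ((fun _ : Fin m => i) t) := by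
                apply Finset.sum_congr rfl; intro i _
                rw [Finset.sum_ite_eq' Finset.univ (fun _ : Fin m => i)]
                simp
          _ = ∑ i : Fin n, l0 i * (if i = a then 0 else Utot * p i) := by
                apply Finset.sum_congr rfl; intro i _
                rw [hW a i]
          _ = ∑ i : Fin n, (Utot * (l0 i * p i) - if i = a then Utot * (l0 i * p i) else 0) := by
                apply Finset.sum_congr rfl; intro i _
                by_cases hia : i = a
                · simp [hia]
                · simp only [hia, if_false]
                  ring
          _ = Utot * ((k0:ℝ)/S k0) - Utot * (l0 a * p a) := by
                rw [Finset.sum_sub_distrib]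
                rw [Finset.sum_ite_eq' Finset.univ a (fun i => Utot * (l0 i * p i))]
                rw [← Finset.mul_sum, hl0sumP]
                simp
        have hinf : (⨅ a : Fin n, Utot * ((k0:ℝ)/S k0) - Utot * (l0 a * p a)) = Utot * g k0 := by
          have hkey : Utot * ((k0:ℝ)/S k0) - Utot * (1/S k0) = Utot * g k0 := by
            rw [← hval]; ring
          apply le_antisymm
          · have h := ciInf_le (f := fun a : Fin n => Utot * ((k0:ℝ)/S k0) - Utot * (l0 a * p a))
              (Set.Finite.bddBelow (Set.finite_range _)) ⟨0, hn0⟩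
            have h0 : l0 (⟨0, hn0⟩ : Fin n) * p ⟨0, hn0⟩ = 1 / S k0 := by
              rw [hl0p]
              have hk0pos : 0 < k0 := hk01
              simp [hk0pos]
            rw [h0] at h
            linarith
          · apply le_ciInf
            intro a
            have hle : l0 a * p a ≤ 1 / S k0 := by
              rw [hl0p]
              split
              · exact le_refl _
              · positivity
            have := mul_le_mul_of_nonneg_left hle hUtot0
            linarith
        rw [iInf_congr hpay, hinf]
    · rintro x ⟨q, hqnn, hqsum, rfl⟩
      rcases eq_or_lt_of_le hUtot0 with h0 | hUpos
      · -- Utot = 0 : everything is zero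
        have hu0 : ∀ t, u t = 0 := by
          have hz : ∑ t, u t = 0 := by rw [← hUtot, ← h0]
          intro t
          exact (Finset.sum_eq_zero_iff_of_nonneg (fun t _ => hu t)).mp hz t (Finset.mem_univ t)
        have hzero : ∀ a : Fin n, (∑ f : Fin m → Fin n, q f *
            ∑ t ∈ Finset.univ.filter (fun t => f t ≠ a), u t * p (f t)) = 0 := by
          intro a
          apply Finset.sum_eq_zero
          intro f _
          rw [Finset.sum_eq_zero (fun t _ => by rw [hu0]; ring), mul_zero]
        rw [iInf_congr hzero, ciInf_const, ← h0, zero_mul]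
      · set L : Fin n → ℝ := fun i =>
          (∑ f : Fin m → Fin n, q f * ∑ t ∈ Finset.univ.filter (fun t => f t = i), u t) / Utot
          with hLdef
        have hUne : Utot ≠ 0 := hUpos.ne'
        have hLnn : ∀ i, 0 ≤ L i := by
          intro i
          rw [hLdef]
          dsimp only
          apply div_nonneg _ hUtot0
          apply Finset.sum_nonneg
          intro f _
          exact mul_nonneg (hqnn f) (Finset.sum_nonneg (fun t _ => hu t))
        have hLsum : ∑ i, L i = 1 := by
          rw [hLdef]
          dsimp only
          rw [← Finset.sum_div, Finset.sum_comm]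
          have hstep : ∀ f : Fin m → Fin n,
              ∑ i : Fin n, q f * (∑ t ∈ Finset.univ.filter (fun t => f t = i), u t)
                = q f * Utot := by
            intro f
            rw [← Finset.mul_sum, Finset.sum_fiberwise, hUtot]
          rw [Finset.sum_congr rfl (fun f _ => hstep f), ← Finset.sum_mul, hqsum, one_mul,
            div_self hUne]
        have hfib : ∀ f : Fin m → Fin n, (∑ t, u t * p (f t))
            = ∑ i : Fin n, (∑ t ∈ Finset.univ.filter (fun t => f t = i), u t) * p i := by
          intro f
          rw [← Finset.sum_fiberwise Finset.univ f (fun t => u t * p (f t))]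
          apply Finset.sum_congr rfl
          intro i _
          rw [Finset.sum_mul]
          apply Finset.sum_congr rfl
          intro t ht
          rw [(Finset.mem_filter.mp ht).2]
        have hB : ∑ f : Fin m → Fin n, q f * (∑ t, u t * p (f t)) = Utot * ∑ i, L i * p i := by
          calc ∑ f : Fin m → Fin n, q f * (∑ t, u t * p (f t))
              = ∑ f : Fin m → Fin n, ∑ i : Fin n,
                  q f * ((∑ t ∈ Finset.univ.filter (fun t => f t = i), u t) * p i) := by
                apply Finset.sum_congr rfl; intro f _
                rw [hfib f, Finset.mul_sum]
          _ = ∑ i : Fin n, ∑ f : Fin m → Fin n,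
                  q f * ((∑ t ∈ Finset.univ.filter (fun t => f t = i), u t) * p i) :=
                Finset.sum_comm
          _ = ∑ i : Fin n,
                (∑ f : Fin m → Fin n, q f * (∑ t ∈ Finset.univ.filter (fun t => f t = i), u t))
                  * p i := by
                apply Finset.sum_congr rfl; intro i _
                rw [Finset.sum_mul]
                apply Finset.sum_congr rfl; intro f _
                ring
          _ = ∑ i : Fin n, (L i * Utot) * p i := by
                apply Finset.sum_congr rfl; intro i _
                rw [hLdef]
                dsimp only
                rw [div_mul_cancel₀ _ hUne]
          _ = Utot * ∑ i, L i * p i := by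
                rw [Finset.mul_sum]
                apply Finset.sum_congr rfl; intro i _
                ring
        have hA : ∀ a : Fin n, (∑ f : Fin m → Fin n, q f *
            (∑ t ∈ Finset.univ.filter (fun t => f t = a), u t * p (f t)))
              = Utot * (L a * p a) := by
          intro a
          have h1 : ∀ f : Fin m → Fin n, ∑ t ∈ Finset.univ.filter (fun t => f t = a), u t * p (f t)
              = (∑ t ∈ Finset.univ.filter (fun t => f t = a), u t) * p a := by
            intro f
            rw [Finset.sum_mul]
            apply Finset.sum_congr rfl
            intro t ht
            rw [(Finset.mem_filter.mp ht).2]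
          calc ∑ f : Fin m → Fin n, q f * (∑ t ∈ Finset.univ.filter (fun t => f t = a), u t * p (f t))
              = ∑ f : Fin m → Fin n, (q f * (∑ t ∈ Finset.univ.filter (fun t => f t = a), u t)) * p a := by
                apply Finset.sum_congr rfl; intro f _
                rw [h1 f]
                ring
          _ = (∑ f : Fin m → Fin n, q f * (∑ t ∈ Finset.univ.filter (fun t => f t = a), u t)) * p a := by
                rw [Finset.sum_mul]
          _ = Utot * (L a * p a) := by
                rw [hLdef]
                dsimp only
                field_simp
        have hpay : ∀ a : Fin n, (∑ f : Fin m → Fin n, q f *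
            ∑ t ∈ Finset.univ.filter (fun t => f t ≠ a), u t * p (f t))
              = Utot * ((∑ i, L i * p i) - L a * p a) := by
          intro a
          have hsplit : ∀ f : Fin m → Fin n,
              (∑ t ∈ Finset.univ.filter (fun t => f t ≠ a), u t * p (f t))
                = (∑ t, u t * p (f t)) - ∑ t ∈ Finset.univ.filter (fun t => f t = a), u t * p (f t) := by
            intro f
            have hh := Finset.sum_filter_add_sum_filter_not Finset.univ
              (fun t => f t = a) (fun t => u t * p (f t))
            have he : Finset.univ.filter (fun t => f t ≠ a)
                = Finset.univ.filter (fun t => ¬ f t = a) := by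
              simp [ne_eq]
            rw [he]
            linarith
          calc (∑ f : Fin m → Fin n, q f * ∑ t ∈ Finset.univ.filter (fun t => f t ≠ a), u t * p (f t))
              = ∑ f : Fin m → Fin n, (q f * (∑ t, u t * p (f t))
                  - q f * ∑ t ∈ Finset.univ.filter (fun t => f t = a), u t * p (f t)) := by
                apply Finset.sum_congr rfl; intro f _
                rw [hsplit f]
                ring
          _ = (∑ f : Fin m → Fin n, q f * (∑ t, u t * p (f t)))
                - ∑ f : Fin m → Fin n, q f * ∑ t ∈ Finset.univ.filter (fun t => f t = a), u t * p (f t) :=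
                Finset.sum_sub_distrib _ _
          _ = Utot * ((∑ i, L i * p i) - L a * p a) := by
                rw [hB, hA a]
                ring
        obtain ⟨b, hb⟩ := Finite.exists_max (fun a : Fin n => L a * p a)
        have hsup : (⨆ i, L i * p i) = L b * p b :=
          le_antisymm (ciSup_le hb)
            (le_ciSup (f := fun i => L i * p i) (Set.Finite.bddAbove (Set.finite_range _)) b)
        calc (⨅ a : Fin n, ∑ f : Fin m → Fin n, q f *
              ∑ t ∈ Finset.univ.filter (fun t => f t ≠ a), u t * p (f t))
            ≤ ∑ f : Fin m → Fin n, q f *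
              ∑ t ∈ Finset.univ.filter (fun t => f t ≠ b), u t * p (f t) :=
              ciInf_le (Set.Finite.bddBelow (Set.finite_range _)) b
        _ = Utot * ((∑ i, L i * p i) - ⨆ i, L i * p i) := by rw [hpay b, hsup]
        _ ≤ Utot * g k0 := part2ub L hLnn hLsum
end

section
/- Let m, n ≥ 1, let ς : Fin m → ℝ be item sizes with ς i > 0, and let γ > 0 be the bin capacity. Construct m + 1 task utilities u : Fin (m+1) → ℝ consisting of ς 0, …, ς (m−1) together with one task of utility γ, and n + 1 workers of equal proficiency p > 0. Then the following are equivalent: (1) there exists a packing f : Fin m → Fin n with ∑_{i : f i = j} ς i ≤ γ for every bin j; (2) there exists an assignment g : Fin (m+1) → Fin (n+1) of tasks to workers such that p · ((∑ t, u t) − max_j ∑_{t : g t = j} u t) ≥ p · ∑ i, ς i, i.e., the HTDA instance has defender value (under a best-responding attacker) at least p · ∑ i, ς i. -/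
/-- Correctness of the bin-packing reduction proving strong NP-hardness
of HTDA. Items of sizes `sig` fit into `n` bins of capacity `γ` iff the HTDA instance —
with `m+1` tasks of utilities `sig 0, …, sig (m−1), γ`, and `n+1` workers of equal
proficiency `p` — admits an assignment of defender value (under a best-responding
attacker) at least `p · ∑ i, sig i`. -/
theorem stmt_12 (m n : ℕ) (hm : 1 ≤ m) (hn : 1 ≤ n)
    (sig : Fin m → ℝ) (hsig : ∀ i, 0 < sig i)
    (γ : ℝ) (hγ : 0 < γ) (p : ℝ) (hp : 0 < p)
    (u : Fin (m + 1) → ℝ) (hu : u = Fin.snoc sig γ) :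
    (∃ f : Fin m → Fin n, ∀ j : Fin n,
        ∑ i ∈ Finset.univ.filter (fun i => f i = j), sig i ≤ γ) ↔
    (∃ g : Fin (m + 1) → Fin (n + 1),
        p * ((∑ t, u t)
            - ⨆ j : Fin (n + 1), ∑ t ∈ Finset.univ.filter (fun t => g t = j), u t)
          ≥ p * ∑ i, sig i) := by
  subst hu
  have hT : (∑ t, (Fin.snoc sig γ : Fin (m+1) → ℝ) t) = (∑ i, sig i) + γ := by
    rw [Fin.sum_univ_castSucc]; simp
  have hL : ∀ (g : Fin (m+1) → Fin (n+1)) (j : Fin (n+1)),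
      (∑ t ∈ Finset.univ.filter (fun t => g t = j), (Fin.snoc sig γ : Fin (m+1) → ℝ) t)
      = (∑ i : Fin m, if g i.castSucc = j then sig i else 0)
        + (if g (Fin.last m) = j then γ else 0) := by
    intro g j
    rw [Finset.sum_filter, Fin.sum_univ_castSucc]
    simp
  constructor
  · rintro ⟨f, hf⟩
    refine ⟨Fin.snoc (fun i => (f i).castSucc) (Fin.last n), ?_⟩
    set g : Fin (m+1) → Fin (n+1) := Fin.snoc (fun i => (f i).castSucc) (Fin.last n) with hgdef
    have hload : ∀ j : Fin (n+1),
        (∑ t ∈ Finset.univ.filter (fun t => g t = j), (Fin.snoc sig γ : Fin (m+1) → ℝ) t) ≤ γ := by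
      intro j
      rw [hL]
      rcases eq_or_ne j (Fin.last n) with rfl | hj
      · have h1 : ∀ i : Fin m, ¬ (g i.castSucc = Fin.last n) := by
          intro i
          simp only [hgdef, Fin.snoc_castSucc]
          exact (Fin.castSucc_lt_last (f i)).ne
        have h2 : g (Fin.last m) = Fin.last n := by simp [hgdef]
        simp [h1, h2]
      · obtain ⟨k, rfl⟩ := Fin.exists_castSucc_eq.2 hj
        have h1 : ∀ i : Fin m, (g i.castSucc = k.castSucc) ↔ f i = k := by
          intro i
          simp only [hgdef, Fin.snoc_castSucc]
          exact Fin.castSucc_inj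
        have h2 : ¬ (g (Fin.last m) = k.castSucc) := by
          simp only [hgdef, Fin.snoc_last]
          exact (Fin.castSucc_lt_last k).ne'
        simp only [h1, h2, if_neg, add_zero, if_false]
        rw [← Finset.sum_filter]
        exact hf k
    have hM : (⨆ j : Fin (n+1), ∑ t ∈ Finset.univ.filter (fun t => g t = j),
        (Fin.snoc sig γ : Fin (m+1) → ℝ) t) ≤ γ := ciSup_le hload
    have : (∑ i, sig i) ≤ (∑ t, (Fin.snoc sig γ : Fin (m+1) → ℝ) t)
        - ⨆ j : Fin (n+1), ∑ t ∈ Finset.univ.filter (fun t => g t = j),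
          (Fin.snoc sig γ : Fin (m+1) → ℝ) t := by
      rw [hT]; linarith
    exact mul_le_mul_of_nonneg_left this hp.le
  · rintro ⟨g, hg⟩
    set L : Fin (n+1) → ℝ := fun j => ∑ t ∈ Finset.univ.filter (fun t => g t = j),
      (Fin.snoc sig γ : Fin (m+1) → ℝ) t with hLdef
    have hbdd : BddAbove (Set.range L) := (Set.finite_range L).bddAbove
    have hSle : (∑ i, sig i) ≤ (∑ t, (Fin.snoc sig γ : Fin (m+1) → ℝ) t) - ⨆ j, L j :=
      (mul_le_mul_iff_right₀ hp).mp hg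
    have hM : (⨆ j, L j) ≤ γ := by rw [hT] at hSle; linarith
    have hLleM : ∀ j, L j ≤ γ := fun j => (le_ciSup hbdd j).trans hM
    set j0 := g (Fin.last m) with hj0
    have hne : ∀ i : Fin m, g i.castSucc ≠ j0 := by
      intro i hi
      have hsub : ({i.castSucc, Fin.last m} : Finset (Fin (m+1))) ⊆
          Finset.univ.filter (fun t => g t = j0) := by
        intro t ht
        simp only [Finset.mem_insert, Finset.mem_singleton] at ht
        rcases ht with rfl | rfl <;> simp [hi, hj0]
      have hpair : ∑ t ∈ ({i.castSucc, Fin.last m} : Finset (Fin (m+1))),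
          (Fin.snoc sig γ : Fin (m+1) → ℝ) t = sig i + γ := by
        rw [Finset.sum_pair (Fin.castSucc_lt_last i).ne]
        simp
      have hle : sig i + γ ≤ L j0 := by
        rw [← hpair]
        refine Finset.sum_le_sum_of_subset_of_nonneg hsub ?_
        intro t _ _
        refine Fin.lastCases ?_ ?_ t
        · simp [hγ.le]
        · intro i'; simp [(hsig i').le]
      have := hLleM j0
      have := hsig i
      linarith
    have hex : ∀ i : Fin m, ∃ k : Fin n, j0.succAbove k = g i.castSucc :=
      fun i => Fin.exists_succAbove_eq (hne i)
    refine ⟨fun i => (hex i).choose, ?_⟩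
    intro j
    have hiff : ∀ i : Fin m, ((hex i).choose = j) ↔ g i.castSucc = j0.succAbove j := by
      intro i
      constructor
      · intro h; rw [← (hex i).choose_spec, h]
      · intro h
        exact Fin.succAbove_right_injective ((hex i).choose_spec.trans h)
    calc ∑ i ∈ Finset.univ.filter (fun i => (hex i).choose = j), sig i
        = ∑ i : Fin m, if g i.castSucc = j0.succAbove j then sig i else 0 := by
          rw [Finset.sum_filter]
          exact Finset.sum_congr rfl (fun i _ => if_congr (hiff i) rfl rfl)
      _ ≤ L (j0.succAbove j) := by
          rw [hLdef]
          simp only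
          rw [hL]
          have : ¬ (g (Fin.last m) = j0.succAbove j) := by
            rw [← hj0]
            exact (Fin.succAbove_ne j0 j).symm
          simp [this]
      _ ≤ γ := hLleM _
end

section
/- Let p : Fin n → ℝ be nonnegative values sorted in decreasing order (i ≤ j → p i ≥ p j), let c : Fin n → ℕ be per-index caps, and let B ∈ ℕ be a budget. Define the greedy allocation s^g recursively in index order by s^g j = min(c j, B − ∑_{j' < j} s^g j'). Then s^g maximizes ∑ j, s j * p j over all s : Fin n → ℕ satisfying s j ≤ c j for all j and ∑ j, s j ≤ B. -/
open Finset in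
private lemma stmt13_insert_filter (n k : ℕ) (hk : k < n) :
    (univ.filter (fun j : Fin n => j.val < k + 1)) =
      insert ⟨k, hk⟩ (univ.filter (fun j : Fin n => j.val < k)) := by
  ext j
  simp [Fin.ext_iff]
  omega

/-- Correctness of the greedy inner loop of Algorithm 2. The greedy
allocation `sg j = min (c j) (B − ∑_{j' < j} sg j')`, processing workers in decreasing
order of proficiency, maximizes `∑ j, s j * p j` over all capped, budgeted allocations. -/
theorem stmt_13 (n : ℕ)
    (p : Fin n → ℝ) (hp : ∀ i, 0 ≤ p i)
    (hsort : ∀ i j : Fin n, i ≤ j → p j ≤ p i)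
    (c : Fin n → ℕ) (B : ℕ)
    (sg : Fin n → ℕ)
    (hsg : ∀ j : Fin n,
      sg j = min (c j) (B - ∑ j' ∈ Finset.univ.filter (fun j' : Fin n => j' < j), sg j')) :
    (∀ j, sg j ≤ c j) ∧ (∑ j, sg j ≤ B) ∧
      ∀ s : Fin n → ℕ, (∀ j, s j ≤ c j) → (∑ j, s j ≤ B) →
        ∑ j, (s j : ℝ) * p j ≤ ∑ j, (sg j : ℝ) * p j := by
  classical
  set F : ℕ → ℕ := fun k => ∑ j ∈ Finset.univ.filter (fun j : Fin n => j.val < k), sg j with hF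
  set C : ℕ → ℕ := fun k => ∑ j ∈ Finset.univ.filter (fun j : Fin n => j.val < k), c j with hC
  have hsg' : ∀ j : Fin n, sg j = min (c j) (B - F j.val) := by
    intro j
    rw [hsg j]
    rfl
  have hnotmem : ∀ (k : ℕ) (hk : k < n),
      (⟨k, hk⟩ : Fin n) ∉ Finset.univ.filter (fun j : Fin n => j.val < k) := by
    intro k hk
    simp
  have hFstep : ∀ (k : ℕ) (hk : k < n), F (k + 1) = sg ⟨k, hk⟩ + F k := by
    intro k hk
    simp only [hF, stmt13_insert_filter n k hk, Finset.sum_insert (hnotmem k hk)]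
  have hCstep : ∀ (k : ℕ) (hk : k < n), C (k + 1) = c ⟨k, hk⟩ + C k := by
    intro k hk
    simp only [hC, stmt13_insert_filter n k hk, Finset.sum_insert (hnotmem k hk)]
  -- greedy prefix formula
  have key : ∀ k, k ≤ n → F k = min (C k) B := by
    intro k
    induction k with
    | zero => intro _; simp [hF, hC]
    | succ k ih =>
      intro hk1
      have hk : k < n := hk1
      have ihk := ih (Nat.le_of_lt hk)
      rw [hFstep k hk, hCstep k hk, hsg' ⟨k, hk⟩, ihk]
      omega
  -- part 1
  have part1 : ∀ j, sg j ≤ c j := fun j => (hsg' j) ▸ Nat.min_le_left _ _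
  -- full sums
  have hfull : ∀ f : Fin n → ℕ,
      ∑ j, f j = ∑ j ∈ Finset.univ.filter (fun j : Fin n => j.val < n), f j := by
    intro f
    apply Finset.sum_congr _ (fun _ _ => rfl)
    symm
    apply Finset.filter_true_of_mem
    intro j _
    exact j.isLt
  have part2 : ∑ j, sg j ≤ B := by
    rw [hfull sg]
    show F n ≤ B
    have := key n le_rfl
    omega
  refine ⟨part1, part2, ?_⟩
  intro s hsc hsB
  set G : ℕ → ℕ := fun k => ∑ j ∈ Finset.univ.filter (fun j : Fin n => j.val < k), s j with hG
  -- prefix dominance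
  have hdom : ∀ k, k ≤ n → G k ≤ F k := by
    intro k hk
    rw [key k hk]
    refine le_min ?_ ?_
    · exact Finset.sum_le_sum (fun j _ => hsc j)
    · calc G k ≤ ∑ j, s j := by
            rw [hfull s]
            apply Finset.sum_le_sum_of_subset
            intro j hj
            simp only [Finset.mem_filter, Finset.mem_univ, true_and] at hj ⊢
            exact j.isLt
        _ ≤ B := hsB
  set P : ℕ → ℝ := fun k => if h : k < n then p ⟨k, h⟩ else 0 with hP
  have hPnonneg : ∀ k, 0 ≤ P k := by
    intro k
    simp only [hP]
    split <;> [exact hp _; exact le_rfl]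
  have hPmono : ∀ (k : ℕ) (hk : k < n), P (k + 1) ≤ p ⟨k, hk⟩ := by
    intro k hk
    simp only [hP]
    split
    · exact hsort ⟨k, hk⟩ ⟨k + 1, by assumption⟩ (by simp [Fin.le_def])
    · exact hp _
  -- Abel-type invariant
  have abel : ∀ k, k ≤ n →
      ((F k : ℝ) - (G k : ℝ)) * P k ≤
        ∑ j ∈ Finset.univ.filter (fun j : Fin n => j.val < k),
          (((sg j : ℝ) - (s j : ℝ)) * p j) := by
    intro k
    induction k with
    | zero => intro _; simp [hF, hG]
    | succ k ih =>
      intro hk1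
      have hk : k < n := hk1
      have ihk := ih (Nat.le_of_lt hk)
      rw [stmt13_insert_filter n k hk, Finset.sum_insert (hnotmem k hk)]
      have hGstep : G (k + 1) = s ⟨k, hk⟩ + G k := by
        simp only [hG, stmt13_insert_filter n k hk, Finset.sum_insert (hnotmem k hk)]
      have hPk : P k = p ⟨k, hk⟩ := by simp [hP, hk]
      have hdom1 : (G (k+1) : ℝ) ≤ (F (k+1) : ℝ) := by
        exact_mod_cast hdom (k+1) hk1
      calc ((F (k+1) : ℝ) - (G (k+1) : ℝ)) * P (k + 1)
          ≤ ((F (k+1) : ℝ) - (G (k+1) : ℝ)) * p ⟨k, hk⟩ := by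
            apply mul_le_mul_of_nonneg_left (hPmono k hk) (by linarith)
        _ = ((sg ⟨k, hk⟩ : ℝ) - (s ⟨k, hk⟩ : ℝ)) * p ⟨k, hk⟩
              + ((F k : ℝ) - (G k : ℝ)) * p ⟨k, hk⟩ := by
            rw [hFstep k hk, hGstep]
            push_cast
            ring
        _ ≤ ((sg ⟨k, hk⟩ : ℝ) - (s ⟨k, hk⟩ : ℝ)) * p ⟨k, hk⟩
              + ∑ j ∈ Finset.univ.filter (fun j : Fin n => j.val < k),
                  (((sg j : ℝ) - (s j : ℝ)) * p j) := by
            rw [← hPk]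
            linarith [ihk]
  have habel := abel n le_rfl
  have hPn : P n = 0 := by simp [hP]
  rw [hPn, mul_zero] at habel
  have hsum : ∑ j ∈ Finset.univ.filter (fun j : Fin n => j.val < n),
      (((sg j : ℝ) - (s j : ℝ)) * p j) =
      ∑ j, (sg j : ℝ) * p j - ∑ j, (s j : ℝ) * p j := by
    have h1 : Finset.univ.filter (fun j : Fin n => j.val < n) = Finset.univ := by
      apply Finset.filter_true_of_mem
      intro j _
      exact j.isLt
    rw [h1, ← Finset.sum_sub_distrib]
    apply Finset.sum_congr rfl
    intro j _
    ring
  rw [hsum] at habel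
  linarith
end

section
/- Let n ≥ 2 and let p : Fin n → ℝ satisfy 1/2 ≤ p i ≤ 1 for all i and be sorted in decreasing order (i ≤ j → p i ≥ p j). Suppose λ is in the standard simplex, two indices w ≠ w' satisfy λ w * p w > λ w' * p w' with λ w' > 0, λ w * p w = max_i (λ i * p i), and p w' > p w. Then λ does not maximize U over the simplex, where U(λ) = (∑ i, λ i * p i) − max_i (λ i * p i): there exists λ' in the simplex with U(λ') > U(λ). -/
/-- First case of the proof of Proposition 4. If in the simplex point `lam`
worker `w` attains the maximum of `lam i * p i`, while `w' ≠ w` has a strictly smaller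
product, `lam w' > 0`, and is strictly more proficient (`p w' > p w`), then `lam` is not
optimal: some simplex point achieves strictly larger defender utility. -/
theorem stmt_14 (n : ℕ) (hn : 2 ≤ n)
    (p : Fin n → ℝ) (hp : ∀ i, 1 / 2 ≤ p i ∧ p i ≤ 1)
    (hsort : ∀ i j : Fin n, i ≤ j → p j ≤ p i)
    (lam : Fin n → ℝ) (h0 : ∀ i, 0 ≤ lam i) (h1 : ∑ i, lam i = 1)
    (w w' : Fin n) (hww' : w ≠ w')
    (hgt : lam w' * p w' < lam w * p w) (hw'pos : 0 < lam w')
    (hmax : lam w * p w = ⨆ i, lam i * p i)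
    (hpw : p w < p w') :
    ∃ l' : Fin n → ℝ, (∀ i, 0 ≤ l' i) ∧ (∑ i, l' i = 1) ∧
      ((∑ i, lam i * p i) - ⨆ i, lam i * p i)
        < ((∑ i, l' i * p i) - ⨆ i, l' i * p i) := by
  have hpw'pos : 0 < p w' := lt_of_lt_of_le (by norm_num) (hp w').1
  have hpwpos : 0 < p w := lt_of_lt_of_le (by norm_num) (hp w).1
  have hlamw : 0 < lam w := by
    nlinarith [mul_nonneg (h0 w') (le_of_lt hpw'pos)]
  set ε : ℝ := min (lam w) ((lam w * p w - lam w' * p w') / p w') with hε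
  have hεpos : 0 < ε := lt_min hlamw (div_pos (by linarith) hpw'pos)
  have hεw : ε ≤ lam w := min_le_left _ _
  have hεw' : lam w' * p w' + ε * p w' ≤ lam w * p w := by
    have := min_le_right (lam w) ((lam w * p w - lam w' * p w') / p w')
    have h2 : ε * p w' ≤ lam w * p w - lam w' * p w' := by
      rw [← div_mul_cancel₀ (lam w * p w - lam w' * p w') (ne_of_gt hpw'pos)]
      exact mul_le_mul_of_nonneg_right this (le_of_lt hpw'pos)
    linarith
  refine ⟨fun i => lam i + (if i = w' then ε else 0) - (if i = w then ε else 0),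
    ?_, ?_, ?_⟩
  · intro i
    by_cases hiw : i = w
    · subst hiw
      simp [hww']
      linarith
    · by_cases hiw' : i = w'
      · subst hiw'
        simp [hiw]
        linarith [h0 i]
      · simp [hiw, hiw']
        exact h0 i
  · simp [Finset.sum_sub_distrib, Finset.sum_add_distrib, h1]
  · have hne : Nonempty (Fin n) := ⟨w⟩
    have hbdd : BddAbove (Set.range fun i => lam i * p i) :=
      Set.Finite.bddAbove (Set.finite_range _)
    have hbdd' : BddAbove (Set.range fun i =>
        (lam i + (if i = w' then ε else 0) - (if i = w then ε else 0)) * p i) :=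
      Set.Finite.bddAbove (Set.finite_range _)
    have hsup' : (⨆ i, (lam i + (if i = w' then ε else 0) - (if i = w then ε else 0)) * p i)
        ≤ lam w * p w := by
      refine ciSup_le fun i => ?_
      by_cases hiw : i = w
      · subst hiw
        simp [hww']
        nlinarith [mul_pos hεpos hpwpos]
      · by_cases hiw' : i = w'
        · subst hiw'
          simp [hiw]
          nlinarith [hεw']
        · simp [hiw, hiw']
          rw [hmax]
          exact le_ciSup hbdd i
    have hsum : (∑ i, (lam i + (if i = w' then ε else 0) - (if i = w then ε else 0)) * p i)
        = (∑ i, lam i * p i) + ε * p w' - ε * p w := by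
      have : ∀ i : Fin n, (lam i + (if i = w' then ε else 0) - (if i = w then ε else 0)) * p i
          = lam i * p i + (if i = w' then ε * p i else 0) - (if i = w then ε * p i else 0) := by
        intro i; split_ifs <;> ring
      rw [Finset.sum_congr rfl fun i _ => this i]
      simp [Finset.sum_sub_distrib, Finset.sum_add_distrib]
    rw [hsum, ← hmax]
    nlinarith [hsup', mul_pos hεpos (sub_pos.mpr hpw)]
end
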